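/- arXiv:1507.05521 — 7 statements merged into one kernel-verified Lean document; each statement's English description precedes it below -/
import Mathlib

section
/- If a matroid M is k-base-orderable, then for every element x of the ground set, both the deletion M \ x and the contraction M / x are k-base-orderable. -/
open Set Matroid

namespace PaperFormal

variable {α β : Type*}

/-- A `k`-exchange-ordering between bases `B₁` and `B₂` of `M`: a bijection `σ : B₁ → B₂`
such that for every `X ⊆ B₁` with `|X| ≤ k`, both `(B₁ - X) ∪ σ(X)` and `(B₂ - σ(X)) ∪ X`
are bases of `M`. -/
def IsExchangeOrdering (M : Matroid α) (k : ℕ) (B₁ B₂ : Set α) (σ : α → α) : Prop :=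
  Set.BijOn σ B₁ B₂ ∧ ∀ X ⊆ B₁, X.encard ≤ k →
    M.IsBase ((B₁ \ X) ∪ σ '' X) ∧ M.IsBase ((B₂ \ σ '' X) ∪ X)

/-- A matroid is `k`-base-orderable if every pair of bases has a `k`-exchange-ordering. -/
def KBaseOrderable (M : Matroid α) (k : ℕ) : Prop :=
  ∀ B₁ B₂, M.IsBase B₁ → M.IsBase B₂ → ∃ σ, IsExchangeOrdering M k B₁ B₂ σ

/-- A matroid is base-orderable if any two bases `B₁`, `B₂` admit a bijection `σ : B₁ → B₂`
such that all the single-element exchanges along `σ` are feasible in both directions. -/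
def BaseOrderable (M : Matroid α) : Prop :=
  ∀ B₁ B₂, M.IsBase B₁ → M.IsBase B₂ → ∃ σ : α → α, Set.BijOn σ B₁ B₂ ∧
    ∀ x ∈ B₁, M.IsBase ((B₁ \ {x}) ∪ {σ x}) ∧ M.IsBase ((B₂ \ {σ x}) ∪ {x})

/-- Deletion of a set of elements from a matroid. -/
def Del (M : Matroid α) (D : Set α) : Matroid α := M ↾ (M.E \ D)

/-- Contraction of a set of elements in a matroid. -/
def Con (M : Matroid α) (C : Set α) : Matroid α := (Del M✶ C)✶

/-- The rank (as a term of `ℕ∞`) of a set in a matroid: the supremum of the cardinalities of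
independent subsets. -/
noncomputable def eRk (M : Matroid α) (X : Set α) : ℕ∞ :=
  ⨆ I ∈ {I | M.Indep I ∧ I ⊆ X}, I.encard

/-- A circuit: a minimal dependent set. -/
def Circuit (M : Matroid α) (C : Set α) : Prop :=
  M.Dep C ∧ ∀ D, D ⊂ C → M.Indep D

/-- A hyperplane: a maximal proper flat. -/
def Hyperplane (M : Matroid α) (H : Set α) : Prop :=
  M.IsFlat H ∧ H ≠ M.E ∧ ∀ F, M.IsFlat F → H ⊂ F → F = M.E

/-- A cyclic flat: a flat that is a union of circuits, equivalently a flat whose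
restriction has no coloops. -/
def CyclicFlat (M : Matroid α) (F : Set α) : Prop :=
  M.IsFlat F ∧ ∀ e ∈ F, e ∈ M.closure (F \ {e})

/-- `M'` is the principal extension of `M` into the set `Y` by the new element `e`,
characterized by its rank function. -/
def IsPrincipalExt (M : Matroid α) (Y : Set α) (e : α) (M' : Matroid α) : Prop :=
  e ∉ M.E ∧ M'.E = insert e M.E ∧ (∀ X ⊆ M.E, eRk M' X = eRk M X) ∧
  ∀ X ⊆ M.E, eRk M' (insert e X) = min (eRk M X + 1) (eRk M (X ∪ Y))
-- Step 1 : sigma fixes common elements when k ≥ 1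
private lemma sigma_fix {M : Matroid α} {k : ℕ} {B₁ B₂ : Set α} {σ : α → α} {x : α}
    (hbij : Set.BijOn σ B₁ B₂)
    (hexch : ∀ X ⊆ B₁, X.encard ≤ k →
      M.IsBase ((B₁ \ X) ∪ σ '' X) ∧ M.IsBase ((B₂ \ σ '' X) ∪ X))
    (hk : 1 ≤ k) (hB₁ : M.IsBase B₁) (hx₁ : x ∈ B₁) (hx₂ : x ∈ B₂) : σ x = x := by
  obtain ⟨z, hz, hzx⟩ := hbij.surjOn hx₂
  have hb := (hexch {z} (singleton_subset_iff.mpr hz)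
      (by rw [Set.encard_singleton]; exact_mod_cast hk)).1
  rw [image_singleton, hzx] at hb
  have hzeq : z = x := by
    by_contra hne
    have hsub : (B₁ \ {z}) ∪ {x} ⊆ B₁ := union_subset diff_subset (singleton_subset_iff.mpr hx₁)
    have heq := hb.eq_of_subset_isBase hB₁ hsub
    rw [← heq, union_singleton, mem_insert_iff] at hz
    rcases hz with h | h
    · exact hne h
    · exact h.2 rfl
  rw [← hzeq, hzx, hzeq]

-- Step 2 : transfer lemma, "same bases minus forbidden element"
private lemma kbo_of_same {M N : Matroid α} {k : ℕ} {x : α}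
    (hbase : ∀ B, N.IsBase B ↔ x ∉ B ∧ M.IsBase B)
    (hM : KBaseOrderable M k) : KBaseOrderable N k := by
  intro B₁ B₂ hB₁ hB₂
  rw [hbase] at hB₁ hB₂
  obtain ⟨σ, hbij, hexch⟩ := hM B₁ B₂ hB₁.2 hB₂.2
  refine ⟨σ, hbij, fun X hX hXk => ?_⟩
  obtain ⟨h1, h2⟩ := hexch X hX hXk
  have hσX : σ '' X ⊆ B₂ := by rw [← hbij.image_eq]; exact image_mono hX
  constructor
  · rw [hbase]
    refine ⟨fun hmem => ?_, h1⟩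
    rcases hmem with h | h
    · exact hB₁.1 h.1
    · exact hB₂.1 (hσX h)
  · rw [hbase]
    refine ⟨fun hmem => ?_, h2⟩
    rcases hmem with h | h
    · exact hB₂.1 h.1
    · exact hB₁.1 (hX h)

-- Step 3 : transfer lemma, "bases are bases of M with x inserted"
private lemma kbo_of_insert {M N : Matroid α} {k : ℕ} {x : α}
    (hbase : ∀ B, N.IsBase B ↔ x ∉ B ∧ M.IsBase (insert x B))
    (hM : KBaseOrderable M k) : KBaseOrderable N k := by
  classical
  intro B₁ B₂ hB₁ hB₂
  rw [hbase] at hB₁ hB₂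
  obtain ⟨hx₁, hB₁'⟩ := hB₁
  obtain ⟨hx₂, hB₂'⟩ := hB₂
  obtain ⟨σ, hbij, hexch⟩ := hM _ _ hB₁' hB₂'
  set τ : α → α := fun e => if σ e = x then σ x else σ e with hτ
  have hinj := hbij.injOn
  have hτbij : Set.BijOn τ B₁ B₂ := by
    refine ⟨fun e he => ?_, fun e he f hf hef => ?_, fun b hb => ?_⟩
    · by_cases h : σ e = x
      · have hσx : σ x ≠ x := by
          intro hxx
          have : e = x := hinj (mem_insert_of_mem _ he) (mem_insert _ _) (h.trans hxx.symm)
          exact hx₁ (this ▸ he)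
        have : σ x ∈ insert x B₂ := hbij.mapsTo (mem_insert _ _)
        simp only [hτ, h, if_pos rfl]
        rcases this with h' | h'
        · exact absurd h' hσx
        · exact h'
      · have : σ e ∈ insert x B₂ := hbij.mapsTo (mem_insert_of_mem _ he)
        simp only [hτ, if_neg h]
        rcases this with h' | h'
        · exact absurd h' h
        · exact h'
    · by_cases h1 : σ e = x <;> by_cases h2 : σ f = x
      · exact hinj (mem_insert_of_mem _ he) (mem_insert_of_mem _ hf) (h1.trans h2.symm)
      · exfalso
        simp only [hτ, if_pos h1, if_neg h2] at hef
        have : x = f := hinj (mem_insert _ _) (mem_insert_of_mem _ hf) hef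
        exact hx₁ (this ▸ hf)
      · exfalso
        simp only [hτ, if_neg h1, if_pos h2] at hef
        have : e = x := hinj (mem_insert_of_mem _ he) (mem_insert _ _) hef
        exact hx₁ (this ▸ he)
      · simp only [hτ, if_neg h1, if_neg h2] at hef
        exact hinj (mem_insert_of_mem _ he) (mem_insert_of_mem _ hf) hef
    · have hb' : b ∈ insert x B₂ := mem_insert_of_mem _ hb
      rw [← hbij.image_eq] at hb'
      obtain ⟨a, ha, hab⟩ := hb'
      rcases ha with rfl | ha
      · -- b = σ a with a = x
        obtain ⟨z, hz, hzx⟩ := hbij.surjOn (mem_insert a B₂)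
        rcases hz with rfl | hz
        · exact absurd (hzx ▸ hab ▸ hb) hx₂
        · exact ⟨z, hz, by simp only [hτ, hzx, if_pos rfl]; exact hab⟩
      · refine ⟨a, ha, ?_⟩
        have : σ a ≠ x := fun h => hx₂ ((h ▸ hab) ▸ hb)
        simp only [hτ, if_neg this]
        exact hab
  refine ⟨τ, hτbij, fun X hX hXk => ?_⟩
  rcases X.eq_empty_or_nonempty with rfl | hne
  · simp only [image_empty, diff_empty, union_empty]
    exact ⟨(hbase _).mpr ⟨hx₁, hB₁'⟩, (hbase _).mpr ⟨hx₂, hB₂'⟩⟩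
  · have hk : 1 ≤ k := by
      have h1 : (1 : ℕ∞) ≤ X.encard := Set.one_le_encard_iff_nonempty.mpr hne
      exact_mod_cast h1.trans hXk
  -- σ fixes x
    have hfix : σ x = x := sigma_fix hbij hexch hk hB₁' (mem_insert _ _) (mem_insert _ _)
    have hσne : ∀ e ∈ X, σ e ≠ x := by
      intro e he hcon
      have : e = x := hinj (mem_insert_of_mem _ (hX he)) (mem_insert _ _) (hcon.trans hfix.symm)
      exact hx₁ (this ▸ hX he)
    have hτσ : τ '' X = σ '' X := image_congr fun e he => by
      simp only [hτ, if_neg (hσne e he)]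
    have hxX : x ∉ X := fun h => hx₁ (hX h)
    have hxσX : x ∉ σ '' X := by
      rintro ⟨e, he, hex⟩
      exact hσne e he hex
    obtain ⟨h1, h2⟩ := hexch X (hX.trans (subset_insert _ _)) hXk
    rw [hτσ]
    constructor
    · rw [hbase]
      refine ⟨fun hmem => ?_, ?_⟩
      · rcases hmem with h | h
        · exact hx₁ h.1
        · exact hxσX h
      · have heq : insert x ((B₁ \ X) ∪ σ '' X) = (insert x B₁ \ X) ∪ σ '' X := by
          ext a
          have hax : a = x → a ∉ X := fun h => h ▸ hxX
          simp only [mem_insert_iff, mem_union, mem_diff]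
          tauto
        rw [heq]
        exact h1
    · rw [hbase]
      refine ⟨fun hmem => ?_, ?_⟩
      · rcases hmem with h | h
        · exact hx₂ h.1
        · exact hxX h
      · have heq : insert x ((B₂ \ σ '' X) ∪ X) = (insert x B₂ \ σ '' X) ∪ X := by
          ext a
          have hax : a = x → a ∉ σ '' X := fun h => h ▸ hxσX
          simp only [mem_insert_iff, mem_union, mem_diff]
          tauto
        rw [heq]
        exact h2

-- Step 4 : base characterization of single-element deletion, coloop case
private lemma del_base_coloop {M : Matroid α} {x : α}
    (hco : ∀ B, M.IsBase B → x ∈ B) (B : Set α) :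
    (Del M {x}).IsBase B ↔ x ∉ B ∧ M.IsBase (insert x B) := by
  have hrw : (Del M {x}).IsBase B ↔ M.IsBasis B (M.E \ {x}) := isBase_restrict_iff diff_subset
  rw [hrw]
  constructor
  · intro h
    have hxB : x ∉ B := fun hx => (h.subset hx).2 rfl
    refine ⟨hxB, ?_⟩
    obtain ⟨B', hB', hsub⟩ := h.indep.exists_isBase_superset
    have hxB' : x ∈ B' := hco _ hB'
    have hBeq : B = B' \ {x} := by
      refine h.eq_of_subset_indep (hB'.indep.subset diff_subset)
        (subset_diff_singleton hsub hxB) (diff_subset_diff_left hB'.subset_ground)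
    rw [hBeq, insert_diff_singleton, insert_eq_of_mem hxB']
    exact hB'
  · rintro ⟨hxB, hB⟩
    have hBi : M.Indep B := hB.indep.subset (subset_insert _ _)
    have hBE : B ⊆ M.E \ {x} :=
      subset_diff_singleton ((subset_insert _ _).trans hB.subset_ground) hxB
    rw [isBasis_iff]
    refine ⟨hBi, hBE, fun J hJ hBJ hJE => ?_⟩
    obtain ⟨B', hB', hsub⟩ := hJ.exists_isBase_superset
    have hxJ : insert x J ⊆ B' := insert_subset (hco _ hB') hsub
    have : insert x B = insert x J :=
      hB.eq_of_subset_indep (hB'.indep.subset hxJ) (insert_subset_insert hBJ)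
    have hJx : J ⊆ insert x B := this ▸ subset_insert x J
    refine subset_antisymm hBJ fun a ha => ?_
    rcases hJx ha with rfl | h
    · exact absurd rfl (hJE ha).2
    · exact h

-- Step 5 : base characterization of single-element deletion, non-coloop case
private lemma del_base_noncoloop {M : Matroid α} {x : α} {B₀ : Set α}
    (hB₀ : M.IsBase B₀) (hxB₀ : x ∉ B₀) (B : Set α) :
    (Del M {x}).IsBase B ↔ x ∉ B ∧ M.IsBase B := by
  have hrw : (Del M {x}).IsBase B ↔ M.IsBasis B (M.E \ {x}) := isBase_restrict_iff diff_subset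
  rw [hrw]
  constructor
  · intro h
    have hxB : x ∉ B := fun hx => (h.subset hx).2 rfl
    refine ⟨hxB, ?_⟩
    obtain ⟨B', hB', hsub⟩ := h.indep.exists_isBase_superset
    by_cases hxB' : x ∈ B'
    · obtain ⟨y, hy, hbase⟩ := hB'.exchange hB₀ ⟨hxB', hxB₀⟩
      have hyx : y ≠ x := fun h => hxB₀ (h ▸ hy.1)
      have hBsub : B ⊆ insert y (B' \ {x}) :=
        (subset_diff_singleton hsub hxB).trans (subset_insert _ _)
      have hsubE : insert y (B' \ {x}) ⊆ M.E \ {x} :=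
        insert_subset ⟨hB₀.subset_ground hy.1, hyx⟩
          (diff_subset_diff_left hB'.subset_ground)
      have := h.eq_of_subset_indep hbase.indep hBsub hsubE
      rw [this]
      exact hbase
    · have : B = B' := h.eq_of_subset_indep hB'.indep hsub
        (subset_diff_singleton hB'.subset_ground hxB')
      rw [this]
      exact hB'
  · rintro ⟨hxB, hB⟩
    rw [isBasis_iff]
    exact ⟨hB.indep, subset_diff_singleton hB.subset_ground hxB,
      fun J hJ hBJ _ => hB.eq_of_subset_indep hJ hBJ⟩

-- Step 6 : base characterization of contraction via dual
private lemma con_base_iff {M : Matroid α} {x : α} (B : Set α) :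
    (Con M {x}).IsBase B ↔ (Del M✶ {x}).IsBase ((M.E \ {x}) \ B) ∧ B ⊆ M.E \ {x} := by
  have hE : (Del M✶ {x}).E = M.E \ {x} := rfl
  rw [Con, dual_isBase_iff', hE]

/-- single-element deletions and contractions of a `k`-base-orderable matroid
are `k`-base-orderable. -/
theorem kBaseOrderable_delete_contract (M : Matroid α) (k : ℕ) (hM : KBaseOrderable M k) :
    ∀ x ∈ M.E, KBaseOrderable (Del M {x}) k ∧ KBaseOrderable (Con M {x}) k := by
  intro x hx
  constructor
  · -- deletion
    by_cases hco : ∀ B, M.IsBase B → x ∈ B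
    · exact kbo_of_insert (del_base_coloop hco) hM
    · push_neg at hco
      obtain ⟨B₀, hB₀, hxB₀⟩ := hco
      exact kbo_of_same (del_base_noncoloop hB₀ hxB₀) hM
  · -- contraction
    by_cases hl : ∀ B, M.IsBase B → x ∉ B
    · -- x is a loop : x is in every base of M✶
      have hco : ∀ B, M✶.IsBase B → x ∈ B := by
        intro B hB
        by_contra hxB
        have hB' : M.IsBase (M.E \ B) := hB.compl_isBase_of_dual
        exact hl _ hB' ⟨hx, hxB⟩
      refine kbo_of_same (x := x) (fun B => ?_) hM
      rw [con_base_iff, del_base_coloop hco]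
      constructor
      · rintro ⟨⟨-, hB⟩, hBE⟩
        have hxB : x ∉ B := fun h => (hBE h).2 rfl
        have heq : insert x ((M.E \ {x}) \ B) = M.E \ B := by
          rw [diff_diff_comm, insert_diff_singleton, insert_eq_of_mem (show x ∈ M.E \ B from ⟨hx, hxB⟩)]
        rw [heq] at hB
        have hB' := hB.compl_isBase_of_dual
        rw [diff_diff_cancel_left (hBE.trans diff_subset)] at hB'
        exact ⟨hxB, hB'⟩
      · rintro ⟨hxB, hB⟩
        have hBE : B ⊆ M.E \ {x} := subset_diff_singleton hB.subset_ground hxB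
        have heq : insert x ((M.E \ {x}) \ B) = M.E \ B := by
          rw [diff_diff_comm, insert_diff_singleton, insert_eq_of_mem (show x ∈ M.E \ B from ⟨hx, hxB⟩)]
        refine ⟨⟨fun h => h.1.2 rfl, ?_⟩, hBE⟩
        rw [heq]
        exact hB.compl_isBase_dual
    · push_neg at hl
      obtain ⟨B₀, hB₀, hxB₀⟩ := hl
      have hd : M✶.IsBase (M.E \ B₀) := hB₀.compl_isBase_dual
      have hxd : x ∉ M.E \ B₀ := fun h => h.2 hxB₀
      refine kbo_of_insert (x := x) (fun B => ?_) hM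
      rw [con_base_iff, del_base_noncoloop hd hxd]
      have hset : (M.E \ {x}) \ B = M.E \ insert x B := by
        rw [diff_diff, singleton_union]
      constructor
      · rintro ⟨⟨-, hB⟩, hBE⟩
        have hxB : x ∉ B := fun h => (hBE h).2 rfl
        rw [hset] at hB
        have hB' := hB.compl_isBase_of_dual
        rw [diff_diff_cancel_left (insert_subset hx (hBE.trans diff_subset))] at hB'
        exact ⟨hxB, hB'⟩
      · rintro ⟨hxB, hB⟩
        have hBE : B ⊆ M.E \ {x} :=
          subset_diff_singleton ((subset_insert _ _).trans hB.subset_ground) hxB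
        refine ⟨⟨fun h => h.1.2 rfl, ?_⟩, hBE⟩
        rw [hset]
        exact hB.compl_isBase_dual


end PaperFormal
end

section
/- If a matroid M is not k-base-orderable, then M has a minor N whose ground set is the disjoint union of two bases of N that have no k-exchange-ordering. -/
open Set Matroid

namespace PaperFormal

variable {α β : Type*}

/-- If a base of `M` is contained in `R`, then the bases of `M ↾ R` are exactly the bases of
`M` contained in `R`. -/
lemma restrict_base_iff_of_base_subset {M : Matroid α} {R B B₀ : Set α}
    (hR : R ⊆ M.E) (hB₀ : M.IsBase B₀) (hB₀R : B₀ ⊆ R) :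
    (M ↾ R).IsBase B ↔ (M.IsBase B ∧ B ⊆ R) := by
  rw [Matroid.isBase_restrict_iff hR]
  constructor
  · intro hB
    refine ⟨hB.indep.isBase_of_spanning ?_, hB.subset⟩
    have hRsp : M.Spanning R := hB₀.spanning.superset hB₀R hR
    rw [spanning_iff_closure_eq (hB.subset.trans hR), hB.closure_eq_closure,
      ← spanning_iff_closure_eq hR]
    exact hRsp
  · rintro ⟨hB, hBR⟩
    exact hB.isBasis_of_subset hR hBR

/-- Bases of the contraction `Con M C`, where `C` is contained in a base of `M`. -/
lemma con_base_iff_s6 {M : Matroid α} {C B B₀ : Set α}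
    (hB₀ : M.IsBase B₀) (hCB₀ : C ⊆ B₀) (hB : B ⊆ M.E \ C) :
    (Con M C).IsBase B ↔ M.IsBase (B ∪ C) := by
  have hCE : C ⊆ M.E := hCB₀.trans hB₀.subset_ground
  have hRE : (M✶.E \ C) ⊆ M✶.E := diff_subset
  have hB' : B ⊆ (M✶ ↾ (M✶.E \ C)).E := by
    rw [Matroid.restrict_ground_eq]; exact hB
  rw [Con, Del, Matroid.dual_isBase_iff hB', Matroid.restrict_ground_eq,
    restrict_base_iff_of_base_subset hRE hB₀.compl_isBase_dual
      (by rw [Matroid.dual_ground]; exact diff_subset_diff_right hCB₀),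
    and_iff_left diff_subset, Matroid.dual_isBase_iff (show ((M✶.E \ C) \ B) ⊆ M.E from diff_subset.trans diff_subset)]
  have : M.E \ ((M✶.E \ C) \ B) = B ∪ C := by
    have h1 : B ⊆ M.E := hB.trans diff_subset
    rw [Matroid.dual_ground]
    ext x
    constructor
    · rintro ⟨hxE, hx⟩
      by_cases hxC : x ∈ C
      · exact Or.inr hxC
      · exact Or.inl (by_contra fun hxB => hx ⟨⟨hxE, hxC⟩, hxB⟩)
    · rintro (hxB | hxC)
      · exact ⟨h1 hxB, fun h => h.2 hxB⟩
      · exact ⟨hCE hxC, fun h => h.1.2 hxC⟩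
  rw [this]

/-- a matroid that is not `k`-base-orderable has a minor whose ground set
is the disjoint union of two bases with no `k`-exchange-ordering. -/
theorem exists_minor_of_not_kBaseOrderable (M : Matroid α) (k : ℕ)
    (h : ¬ KBaseOrderable M k) :
    ∃ C D : Set α, C ⊆ M.E ∧ D ⊆ M.E ∧ Disjoint C D ∧
      ∃ B₁ B₂ : Set α, (Del (Con M C) D).IsBase B₁ ∧ (Del (Con M C) D).IsBase B₂ ∧
        Disjoint B₁ B₂ ∧ B₁ ∪ B₂ = (Del (Con M C) D).E ∧
        ¬ ∃ σ, IsExchangeOrdering (Del (Con M C) D) k B₁ B₂ σ := by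
  unfold KBaseOrderable at h
  push_neg at h
  obtain ⟨B₁, B₂, hB₁, hB₂, hno⟩ := h
  have hB₁E : B₁ ⊆ M.E := hB₁.subset_ground
  have hB₂E : B₂ ⊆ M.E := hB₂.subset_ground
  set C : Set α := B₁ ∩ B₂ with hC
  set D : Set α := M.E \ (B₁ ∪ B₂) with hD
  set B₁' : Set α := B₁ \ C with hB₁'
  set B₂' : Set α := B₂ \ C with hB₂'
  set N : Matroid α := Del (Con M C) D with hN
  have hCB₁ : C ⊆ B₁ := inter_subset_left
  have hCE : C ⊆ M.E := hCB₁.trans hB₁E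
  have hConE : (Con M C).E = M.E \ C := rfl
  have hNE : N.E = B₁' ∪ B₂' := by
    rw [hN, Del, Matroid.restrict_ground_eq, hConE]
    ext x
    simp only [hD, hB₁', hB₂', hC, mem_diff, mem_union, mem_inter_iff]
    constructor
    · rintro ⟨⟨hxE, hxC⟩, hx⟩
      rcases not_not.mp (fun hh => hx ⟨hxE, fun hc => hh (by tauto)⟩) with (h1 | h2)
      · exact Or.inl ⟨h1, hxC⟩
      · exact Or.inr ⟨h2, hxC⟩
    · rintro (⟨h1, h2⟩ | ⟨h1, h2⟩)
      · exact ⟨⟨hB₁E h1, h2⟩, fun hc => hc.2 (Or.inl h1)⟩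
      · exact ⟨⟨hB₂E h1, h2⟩, fun hc => hc.2 (Or.inr h1)⟩
  -- the key characterization of bases of N
  have hB₁'C : B₁' ∪ C = B₁ := by
    simp only [hB₁']; rw [diff_union_self, union_eq_self_of_subset_right hCB₁]
  have hB₂'C : B₂' ∪ C = B₂ := by
    simp only [hB₂']; rw [diff_union_self, union_eq_self_of_subset_right inter_subset_right]
  have hkey : ∀ B : Set α, B ⊆ B₁' ∪ B₂' → (N.IsBase B ↔ M.IsBase (B ∪ C)) := by
    intro B hBsub
    have hB₁'con : (Con M C).IsBase B₁' := by
      rw [con_base_iff_s6 hB₁ hCB₁ (by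
        simp only [hB₁', hC]
        exact fun x hx => ⟨hB₁E hx.1, hx.2⟩), hB₁'C]
      exact hB₁
    have hsubE : B₁' ∪ B₂' ⊆ (Con M C).E := by
      rw [hConE]
      rintro x (hx | hx)
      · exact ⟨hB₁E hx.1, hx.2⟩
      · exact ⟨hB₂E hx.1, hx.2⟩
    have hB₁'sub : B₁' ⊆ B₁' ∪ B₂' := subset_union_left
    have hrest : ∀ B' : Set α, N.IsBase B' ↔ ((Con M C).IsBase B' ∧ B' ⊆ B₁' ∪ B₂') := by
      intro B'
      have : (Con M C).E \ D = B₁' ∪ B₂' := by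
        rw [← hNE]; rfl
      rw [hN, Del, this]
      exact restrict_base_iff_of_base_subset hsubE hB₁'con hB₁'sub
    rw [hrest, and_iff_left hBsub,
      con_base_iff_s6 hB₁ hCB₁ ((hBsub.trans hsubE) : B ⊆ M.E \ C)]
  -- disjointness facts
  have hdisjB : Disjoint B₁' B₂' := by
    rw [disjoint_left]
    rintro x ⟨hx1, hxC⟩ ⟨hx2, _⟩
    exact hxC ⟨hx1, hx2⟩
  have hdB₂C : Disjoint B₂' C := disjoint_sdiff_left
  have hB₁'Cd : Disjoint B₁' C := disjoint_sdiff_left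
  refine ⟨C, D, hCE, diff_subset, ?_, B₁', B₂', ?_, ?_, hdisjB, hNE.symm, ?_⟩
  · rw [disjoint_left]
    rintro x ⟨hx1, hx2⟩ ⟨_, hx⟩
    exact hx (Or.inl hx1)
  · rw [hkey B₁' subset_union_left, hB₁'C]; exact hB₁
  · rw [hkey B₂' subset_union_right, hB₂'C]; exact hB₂
  · rintro ⟨σ', hbij', hexch'⟩
    classical
    -- build an exchange ordering for M
    set σ : α → α := fun x => if x ∈ B₁' then σ' x else x with hσ
    have hσeq : ∀ x ∈ B₁', σ x = σ' x := fun x hx => if_pos hx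
    have hσC : ∀ x ∈ C, σ x = x := fun x hx =>
      if_neg (fun hh => hh.2 hx)
    have hmaps : ∀ x ∈ B₁', σ' x ∈ B₂' := fun x hx => hbij'.mapsTo hx
    apply hno σ
    constructor
    · -- BijOn σ B₁ B₂
      have h1 : Set.BijOn σ B₁' B₂' := hbij'.congr fun x hx => (hσeq x hx).symm
      have h2 : Set.BijOn σ C C := (bijOn_id C).congr fun x hx => (hσC x hx).symm
      have h3 : Set.InjOn σ (B₁' ∪ C) := by
        rintro x (hx | hx) y (hy | hy) hxy
        · exact h1.injOn hx hy hxy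
        · exfalso
          rw [hσeq x hx, hσC y hy] at hxy
          exact hdB₂C.ne_of_mem (hmaps x hx) hy hxy
        · exfalso
          rw [hσC x hx, hσeq y hy] at hxy
          exact hdB₂C.ne_of_mem (hmaps y hy) hx hxy.symm
        · rw [hσC x hx, hσC y hy] at hxy; exact hxy
      have := h1.union h2 h3
      rwa [hB₁'C, union_comm B₂' C, union_comm C B₂', hB₂'C] at this
    · intro X hXB₁ hXk
      set X₁ : Set α := X \ C with hX₁
      have hX₁sub : X₁ ⊆ B₁' := diff_subset_diff_left hXB₁
      have hX₁k : X₁.encard ≤ k := le_trans (Set.encard_mono diff_subset) hXk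
      obtain ⟨hbase1, hbase2⟩ := hexch' X₁ hX₁sub hX₁k
      rw [hkey _ (union_subset ((diff_subset).trans subset_union_left)
        ((image_subset_iff.mpr (fun x hx => hmaps x (hX₁sub hx))).trans subset_union_right))]
        at hbase1
      rw [hkey _ (union_subset ((diff_subset).trans subset_union_right)
        (hX₁sub.trans subset_union_left))] at hbase2
      -- compute σ '' X
      have himg : σ '' X = σ' '' X₁ ∪ (X ∩ C) := by
        ext y
        simp only [mem_image, mem_union, mem_inter_iff]
        constructor
        · rintro ⟨x, hx, rfl⟩
          by_cases hxC : x ∈ C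
          · rw [hσC x hxC]; exact Or.inr ⟨hx, hxC⟩
          · exact Or.inl ⟨x, ⟨hx, hxC⟩, (hσeq x ⟨hXB₁ hx, hxC⟩).symm⟩
        · rintro (⟨x, hx, rfl⟩ | ⟨hx, hxC⟩)
          · exact ⟨x, hx.1, hσeq x (hX₁sub hx)⟩
          · exact ⟨y, hx, hσC y hxC⟩
      have himg₁ : σ '' X₁ = σ' '' X₁ := by
        apply image_congr
        intro x hx; exact hσeq x (hX₁sub hx)
      have hσ'X₁ : σ' '' X₁ ⊆ B₂' := image_subset_iff.mpr fun x hx => hmaps x (hX₁sub hx)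
      have hXC : X ∩ C ⊆ C := inter_subset_right
      constructor
      · have heq : (B₁' \ X₁ ∪ σ' '' X₁) ∪ C = (B₁ \ X) ∪ σ '' X := by
          rw [himg]
          ext x
          simp only [hB₁', hX₁, mem_union, mem_diff, mem_inter_iff]
          constructor
          · rintro ((⟨⟨h1, h2⟩, h3⟩ | h1) | h1)
            · exact Or.inl ⟨h1, fun hx => h3 ⟨hx, h2⟩⟩
            · exact Or.inr (Or.inl h1)
            · by_cases hx : x ∈ X
              · exact Or.inr (Or.inr ⟨hx, h1⟩)
              · exact Or.inl ⟨hCB₁ h1, hx⟩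
          · rintro (⟨h1, h2⟩ | (h1 | ⟨h1, h2⟩))
            · by_cases hx : x ∈ C
              · exact Or.inr hx
              · exact Or.inl (Or.inl ⟨⟨h1, hx⟩, fun hh => h2 hh.1⟩)
            · exact Or.inl (Or.inr h1)
            · exact Or.inr h2
        rwa [heq] at hbase1
      · have heq : (B₂' \ σ' '' X₁ ∪ X₁) ∪ C = (B₂ \ σ '' X) ∪ X := by
          rw [himg]
          ext x
          simp only [hB₂', hX₁, mem_union, mem_diff, mem_inter_iff]
          constructor
          · rintro ((⟨⟨h1, h2⟩, h3⟩ | ⟨h1, h2⟩) | h1)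
            · exact Or.inl ⟨h1, fun hh => hh.elim h3 (fun hc => h2 hc.2)⟩
            · exact Or.inr h1
            · by_cases hx : x ∈ X
              · exact Or.inr hx
              · refine Or.inl ⟨inter_subset_right h1, fun hh => ?_⟩
                rcases hh with hh | hh
                · exact hdB₂C.ne_of_mem (hσ'X₁ hh) h1 rfl
                · exact hx hh.1
          · rintro (⟨h1, h2⟩ | h1)
            · by_cases hx : x ∈ C
              · exact Or.inr hx
              · exact Or.inl (Or.inl ⟨⟨h1, hx⟩, fun hh => h2 (Or.inl hh)⟩)
            · by_cases hx : x ∈ C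
              · exact Or.inr hx
              · exact Or.inl (Or.inr ⟨h1, hx⟩)
        rwa [heq] at hbase2

end PaperFormal
end

section
/- Let M be a rank-r matroid with exactly 2r elements that is not k-base-orderable. If every single-element contraction M / x is k-base-orderable, then every single-element deletion M \ y is k-base-orderable (and hence M is an excluded minor for the class of k-base-orderable matroids). -/
open Set Matroid

namespace PaperFormal

variable {α β : Type*}

section Aux

variable {M : Matroid α} {x y : α} {r : ℕ} {B B' B₀ B₁ B₂ I X : Set α}

lemma base_encard_of_eRk (hr : eRk M M.E = r) (hB : M.IsBase B) : B.encard = r := by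
  have hle : B.encard ≤ eRk M M.E := by
    show B.encard ≤ ⨆ I ∈ {I | M.Indep I ∧ I ⊆ M.E}, I.encard
    exact le_iSup₂ (f := fun (I : Set α) (_ : I ∈ {I | M.Indep I ∧ I ⊆ M.E}) => I.encard) B
      ⟨hB.indep, hB.subset_ground⟩
  have hge : eRk M M.E ≤ B.encard := by
    show (⨆ I ∈ {I | M.Indep I ∧ I ⊆ M.E}, I.encard) ≤ B.encard
    refine iSup₂_le fun I hI => ?_
    obtain ⟨B'', hB'', hIB⟩ := hI.1.exists_isBase_superset
    exact (encard_mono hIB).trans (hB''.encard_eq_encard_of_isBase hB).le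
  rw [← hr]
  exact le_antisymm hle hge

lemma con_ground : (Con M {x}).E = M.E \ {x} := rfl

lemma con_eq_def : Con M {x} = (M✶ ↾ (M.E \ {x}))✶ := rfl

lemma del_eq_def : Del M {y} = M ↾ (M.E \ {y}) := rfl

lemma con_base_of_base (hB : M.IsBase B) (hx : x ∈ B) : (Con M {x}).IsBase (B \ {x}) := by
  have hxs : {x} ⊆ B := singleton_subset_iff.mpr hx
  have hbx : M.IsBasis (B ∩ {x}) {x} := by
    rw [inter_eq_self_of_subset_right hxs]
    exact (hB.indep.subset hxs).isBasis_self
  have hd := hB.compl_inter_isBasis_of_inter_isBasis hbx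
  have h1 : (M.E \ B) ∩ (M.E \ {x}) = (M.E \ {x}) \ (B \ {x}) := by
    ext z
    simp only [mem_inter_iff, mem_diff, mem_singleton_iff]
    tauto
  rw [h1] at hd
  have hrest : (M✶ ↾ (M.E \ {x})).IsBase ((M.E \ {x}) \ (B \ {x})) := hd.restrict_isBase
  have hsub : B \ {x} ⊆ M.E \ {x} := diff_subset_diff_left hB.subset_ground
  rw [con_eq_def]
  exact (dual_isBase_iff (M := M✶ ↾ (M.E \ {x})) hsub).mpr hrest

lemma base_of_con_base (hr : eRk M M.E = r) (hB₀ : M.IsBase B₀) (hx : x ∈ B₀)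
    (hB' : (Con M {x}).IsBase B') : M.IsBase (insert x B') ∧ x ∉ B' := by
  have hB'sub : B' ⊆ M.E \ {x} := hB'.subset_ground
  have hxB' : x ∉ B' := fun h => (hB'sub h).2 rfl
  have hcard : B'.encard = (B₀ \ {x}).encard :=
    hB'.encard_eq_encard_of_isBase (con_base_of_base hB₀ hx)
  rw [con_eq_def] at hB'
  have hdb : (M✶ ↾ (M.E \ {x})).IsBase ((M.E \ {x}) \ B') :=
    (dual_isBase_iff (M := M✶ ↾ (M.E \ {x})) hB'sub).mp hB'
  have hbasis : M✶.IsBasis ((M.E \ {x}) \ B') (M.E \ {x}) :=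
    (isBase_restrict_iff diff_subset).mp hdb
  obtain ⟨B, hB, hdisj⟩ :=
    (dual_indep_iff_exists (diff_subset.trans diff_subset)).mp hbasis.indep
  have hsub : B ⊆ insert x B' := by
    intro z hz
    by_contra hzn
    simp only [mem_insert_iff, not_or] at hzn
    exact (disjoint_left.mp hdisj ⟨⟨hB.subset_ground hz, hzn.1⟩, hzn.2⟩) hz
  have hBr : B.encard = r := base_encard_of_eRk hr hB
  have hB₀r : B₀.encard = r := base_encard_of_eRk hr hB₀
  have hins : (insert x B').encard = (r : ℕ∞) := by
    rw [encard_insert_of_notMem hxB', hcard, encard_diff_singleton_add_one hx, hB₀r]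
  have hfin : (insert x B').Finite := finite_of_encard_eq_coe hins
  have hEq : B = insert x B' :=
    hfin.eq_of_subset_of_encard_le' hsub (by rw [hins, hBr])
  exact ⟨hEq ▸ hB, hxB'⟩

lemma del_base_iff_of_base (hr : eRk M M.E = r) (hB₀ : M.IsBase B₀) (hyB₀ : y ∉ B₀) :
    (Del M {y}).IsBase B ↔ M.IsBase B ∧ y ∉ B := by
  have hB₀sub : B₀ ⊆ M.E \ {y} := subset_diff_singleton hB₀.subset_ground hyB₀
  have hB₀basis : M.IsBasis B₀ (M.E \ {y}) := hB₀.isBasis_ground.isBasis_subset hB₀sub diff_subset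
  have hB₀del : (Del M {y}).IsBase B₀ := by
    rw [del_eq_def]; exact hB₀basis.restrict_isBase
  constructor
  · intro h
    have hbasis : M.IsBasis B (M.E \ {y}) := by
      rw [del_eq_def] at h
      exact (isBase_restrict_iff diff_subset).mp h
    have hcard : B.encard = B₀.encard := h.encard_eq_encard_of_isBase hB₀del
    obtain ⟨B'', hB'', hsub⟩ := hbasis.indep.exists_isBase_superset
    have hBr : B''.encard = (r : ℕ∞) := base_encard_of_eRk hr hB''
    have h0 : B₀.encard = (r : ℕ∞) := base_encard_of_eRk hr hB₀
    have hfin : B''.Finite := finite_of_encard_eq_coe hBr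
    have hEq : B = B'' := hfin.eq_of_subset_of_encard_le' hsub (by rw [hBr, hcard, h0])
    exact ⟨hEq ▸ hB'', fun hy => (hbasis.subset hy).2 rfl⟩
  · rintro ⟨hB, hyB⟩
    rw [del_eq_def]
    exact ((hB.isBasis_ground.isBasis_subset (subset_diff_singleton hB.subset_ground hyB)
      diff_subset)).restrict_isBase

lemma insert_coloop_indep (hco : ∀ B, M.IsBase B → y ∈ B) (hI : M.Indep I) :
    M.Indep (insert y I) := by
  obtain ⟨B, hB, hIB⟩ := hI.exists_isBase_superset
  exact hB.indep.subset (insert_subset (hco B hB) hIB)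

lemma coloop_basis_iff (hco : ∀ B, M.IsBase B → y ∈ B) (hB'sub : B' ⊆ M.E \ {y}) :
    M.IsBasis B' (M.E \ {y}) ↔ M.IsBase (insert y B') := by
  have hyB' : y ∉ B' := fun hy => (hB'sub hy).2 rfl
  constructor
  · intro h
    have hind : M.Indep (insert y B') := insert_coloop_indep hco h.indep
    obtain ⟨B'', hB'', hsub⟩ := hind.exists_isBase_superset
    have hBsub : B'' ⊆ insert y B' := by
      intro z hz
      by_contra hzn
      simp only [mem_insert_iff, not_or] at hzn
      have hzi : M.Indep (insert z B') :=
        hB''.indep.subset (insert_subset hz ((subset_insert _ _).trans hsub))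
      exact hzn.2 (h.mem_of_insert_indep ⟨hB''.subset_ground hz, hzn.1⟩ hzi)
    rwa [hBsub.antisymm hsub] at hB''
  · intro h
    refine Indep.isBasis_of_forall_insert (h.indep.subset (subset_insert _ _)) hB'sub
      (fun e he => ?_)
    refine dep_iff.mpr ⟨fun hi => ?_, insert_subset he.1.1 (hB'sub.trans diff_subset)⟩
    have h2 : M.Indep (insert y (insert e B')) := insert_coloop_indep hco hi
    have h3 := h.eq_of_subset_indep h2 (insert_subset_insert (subset_insert _ _))
    have he' : e ∈ insert y B' := h3 ▸ (mem_insert_of_mem _ (mem_insert _ _))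
    rcases he' with he' | he'
    · exact he.1.2 he'
    · exact he.2 he'

lemma con_base_iff_coloop (hr : eRk M M.E = r) (hco : ∀ B, M.IsBase B → y ∈ B) :
    (Con M {y}).IsBase B' ↔ M.IsBase (insert y B') ∧ y ∉ B' := by
  obtain ⟨B₀, hB₀⟩ := M.exists_isBase
  constructor
  · intro h
    exact base_of_con_base hr hB₀ (hco _ hB₀) h
  · rintro ⟨h, hyB'⟩
    have := con_base_of_base h (mem_insert _ _)
    rwa [insert_diff_self_of_notMem hyB'] at this

lemma del_base_iff_coloop (hyE : y ∈ M.E) (hco : ∀ B, M.IsBase B → y ∈ B) :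
    (Del M {y}).IsBase B' ↔ M.IsBase (insert y B') ∧ y ∉ B' := by
  rw [del_eq_def, isBase_restrict_iff diff_subset]
  constructor
  · intro h
    exact ⟨(coloop_basis_iff hco h.subset).mp h, fun hy => (h.subset hy).2 rfl⟩
  · rintro ⟨h, hyB'⟩
    have hsub : B' ⊆ M.E \ {y} := by
      refine subset_diff_singleton ?_ hyB'
      exact (subset_insert _ _).trans h.subset_ground
    exact (coloop_basis_iff hco hsub).mpr h

end Aux

/-- if a rank-`r` matroid on `2r` elements is not `k`-base-orderable but all
its single-element contractions are, then all its single-element deletions are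
`k`-base-orderable as well. -/
theorem kBaseOrderable_deletions (M : Matroid α) (k r : ℕ)
    (hr : eRk M M.E = r) (hcard : M.E.encard = 2 * r)
    (hM : ¬ KBaseOrderable M k)
    (hcon : ∀ x ∈ M.E, KBaseOrderable (Con M {x}) k) :
    ∀ y ∈ M.E, KBaseOrderable (Del M {y}) k := by
  intro y hyE
  by_cases hco : ∀ B, M.IsBase B → y ∈ B
  · -- `y` is a coloop : deletion and contraction by `y` have the same bases
    have hsame : ∀ B', (Del M {y}).IsBase B' ↔ (Con M {y}).IsBase B' := fun B' => by
      rw [del_base_iff_coloop hyE hco, con_base_iff_coloop hr hco]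
    intro B₁ B₂ h1 h2
    obtain ⟨σ, hbij, hexch⟩ := hcon y hyE B₁ B₂ ((hsame B₁).mp h1) ((hsame B₂).mp h2)
    exact ⟨σ, hbij, fun X hX hXk =>
      ⟨(hsame _).mpr (hexch X hX hXk).1, (hsame _).mpr (hexch X hX hXk).2⟩⟩
  · push_neg at hco
    obtain ⟨B₀, hB₀, hyB₀⟩ := hco
    intro B₁ B₂ h1 h2
    rw [del_base_iff_of_base hr hB₀ hyB₀] at h1 h2
    obtain ⟨hB₁, hyB₁⟩ := h1
    obtain ⟨hB₂, hyB₂⟩ := h2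
    -- the two bases intersect, by a counting argument
    have hxex : (B₁ ∩ B₂).Nonempty := by
      by_contra hdisj
      rw [not_nonempty_iff_eq_empty] at hdisj
      have hsub : B₁ ∪ B₂ ⊆ M.E \ {y} := union_subset
        (subset_diff_singleton hB₁.subset_ground hyB₁)
        (subset_diff_singleton hB₂.subset_ground hyB₂)
      have hWards : (B₁ ∪ B₂).encard = (r : ℕ∞) + r := by
        have := encard_union_add_encard_inter B₁ B₂
        rw [hdisj, encard_empty, add_zero, base_encard_of_eRk hr hB₁,
          base_encard_of_eRk hr hB₂] at this
        exact this
      have hle : (r : ℕ∞) + r + 1 ≤ (r : ℕ∞) + r := by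
        calc (r : ℕ∞) + r + 1 ≤ (M.E \ {y}).encard + 1 := by
              exact add_le_add_left (hWards ▸ encard_mono hsub) 1
          _ = M.E.encard := encard_diff_singleton_add_one hyE
          _ = 2 * r := hcard
          _ = (r : ℕ∞) + r := by rw [two_mul]
      rw [show (r : ℕ∞) + r + 1 = ((r + r + 1 : ℕ) : ℕ∞) by push_cast; ring,
        show (r : ℕ∞) + r = ((r + r : ℕ) : ℕ∞) by push_cast; ring, Nat.cast_le] at hle
      omega
    obtain ⟨x, hx1, hx2⟩ := hxex
    have hxE : x ∈ M.E := hB₁.subset_ground hx1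
    obtain ⟨σ', hbij, hexch⟩ := hcon x hxE (B₁ \ {x}) (B₂ \ {x})
      (con_base_of_base hB₁ hx1) (con_base_of_base hB₂ hx2)
    classical
    refine ⟨fun z => if z = x then x else σ' z, ⟨?_, ?_, ?_⟩, ?_⟩
    · -- MapsTo
      intro z hz
      by_cases hzx : z = x
      · simpa [hzx] using hx2
      · simpa [hzx] using (hbij.mapsTo ⟨hz, hzx⟩).1
    · -- InjOn
      intro a ha b hb hab
      by_cases hax : a = x <;> by_cases hbx : b = x
      · rw [hax, hbx]
      · simp only [hax, if_pos rfl, if_neg hbx] at hab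
        exact absurd hab.symm (hbij.mapsTo ⟨hb, hbx⟩).2
      · simp only [hbx, if_pos rfl, if_neg hax] at hab
        exact absurd hab (hbij.mapsTo ⟨ha, hax⟩).2
      · simp only [if_neg hax, if_neg hbx] at hab
        have := hbij.injOn ⟨ha, hax⟩ ⟨hb, hbx⟩ hab
        exact this
    · -- SurjOn
      intro b hb
      by_cases hbx : b = x
      · exact ⟨x, hx1, by simp [hbx]⟩
      · obtain ⟨a, ha, hab⟩ := hbij.surjOn ⟨hb, hbx⟩
        have hax : a ≠ x := fun h => ha.2 (mem_singleton_iff.mpr h)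
        exact ⟨a, ha.1, by simpa [hax] using hab⟩
    · -- exchange property
      intro X hX hXk
      set σ : α → α := fun z => if z = x then x else σ' z with hσdef
      set X' : Set α := X \ {x} with hX'def
      have hX'sub : X' ⊆ B₁ \ {x} := diff_subset_diff_left hX
      have hX'k : X'.encard ≤ (k : ℕ∞) := (encard_mono diff_subset).trans hXk
      have himgX' : σ '' X' = σ' '' X' := by
        refine image_congr fun z hz => ?_
        have hzx : z ≠ x := fun h => hz.2 (mem_singleton_iff.mpr h)
        simp [hσdef, hzx]
      have hximg : x ∉ σ' '' X' := by
        intro h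
        have : σ' '' X' ⊆ B₂ \ {x} := (image_mono (f := σ') hX'sub).trans hbij.mapsTo.image_subset
        exact (this h).2 rfl
      obtain ⟨hc1, hc2⟩ := hexch X' hX'sub hX'k
      obtain ⟨hm1, -⟩ := base_of_con_base hr hB₁ hx1 hc1
      obtain ⟨hm2, -⟩ := base_of_con_base hr hB₂ hx2 hc2
      by_cases hxX : x ∈ X
      · have hσX : σ '' X = insert x (σ' '' X') := by
          have : X = insert x X' := by
            rw [hX'def, insert_diff_singleton, insert_eq_of_mem hxX]
          rw [this, image_insert_eq, himgX']
          simp [hσdef]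
        have he1 : insert x (((B₁ \ {x}) \ X') ∪ σ' '' X') = (B₁ \ X) ∪ σ '' X := by
          rw [hσX]
          ext z
          simp only [mem_insert_iff, mem_union, mem_diff, mem_singleton_iff, hX'def]
          tauto
        have he2 : insert x (((B₂ \ {x}) \ σ' '' X') ∪ X') = (B₂ \ σ '' X) ∪ X := by
          rw [hσX]
          ext z
          simp only [mem_insert_iff, mem_union, mem_diff, mem_singleton_iff, hX'def]
          constructor
          · rintro (rfl | h)
            · exact Or.inr hxX
            · tauto
          · rintro (⟨hz, hz2⟩ | hz)
            · by_cases hzx : z = x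
              · exact Or.inl hzx
              · exact Or.inr (Or.inl ⟨⟨hz, hzx⟩, fun h => hz2 (Or.inr h)⟩)
            · by_cases hzx : z = x
              · exact Or.inl hzx
              · exact Or.inr (Or.inr ⟨hz, hzx⟩)
        rw [he1] at hm1
        rw [he2] at hm2
        constructor
        · rw [del_base_iff_of_base hr hB₀ hyB₀]
          refine ⟨hm1, ?_⟩
          rintro (⟨h, -⟩ | h)
          · exact hyB₁ h
          · rw [hσX] at h
            rcases h with h | h
            · exact hyB₁ (h ▸ hx1)
            · have : σ' '' X' ⊆ B₂ \ {x} :=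
                (image_mono (f := σ') hX'sub).trans hbij.mapsTo.image_subset
              exact hyB₂ (this h).1
        · rw [del_base_iff_of_base hr hB₀ hyB₀]
          refine ⟨hm2, ?_⟩
          rintro (⟨h, -⟩ | h)
          · exact hyB₂ h
          · exact hyB₁ (hX h)
      · have hX'eq : X' = X := by rw [hX'def, diff_singleton_eq_self hxX]
        have hσX : σ '' X = σ' '' X' := by rw [hX'eq] at himgX' ⊢; exact himgX'
        rw [hX'eq] at hximg
        have he1 : insert x (((B₁ \ {x}) \ X') ∪ σ' '' X') = (B₁ \ X) ∪ σ '' X := by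
          rw [hσX, hX'eq]
          ext z
          simp only [mem_insert_iff, mem_union, mem_diff, mem_singleton_iff]
          constructor
          · rintro (rfl | h)
            · exact Or.inl ⟨hx1, hxX⟩
            · tauto
          · tauto
        have he2 : insert x (((B₂ \ {x}) \ σ' '' X') ∪ X') = (B₂ \ σ '' X) ∪ X := by
          rw [hσX, hX'eq]
          ext z
          simp only [mem_insert_iff, mem_union, mem_diff, mem_singleton_iff]
          constructor
          · rintro (rfl | h)
            · exact Or.inl ⟨hx2, hximg⟩
            · tauto
          · rintro (⟨hz, hz2⟩ | hz)
            · by_cases hzx : z = x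
              · exact Or.inl hzx
              · exact Or.inr (Or.inl ⟨⟨hz, hzx⟩, hz2⟩)
            · exact Or.inr (Or.inr hz)
        rw [he1] at hm1
        rw [he2] at hm2
        have himsub : σ '' X ⊆ B₂ \ {x} := by
          rw [hσX, hX'eq]
          exact (image_mono (f := σ') (hX'eq ▸ hX'sub)).trans hbij.mapsTo.image_subset
        constructor
        · rw [del_base_iff_of_base hr hB₀ hyB₀]
          refine ⟨hm1, ?_⟩
          rintro (⟨h, -⟩ | h)
          · exact hyB₁ h
          · exact hyB₂ (himsub h).1
        · rw [del_base_iff_of_base hr hB₀ hyB₀]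
          refine ⟨hm2, ?_⟩
          rintro (⟨h, -⟩ | h)
          · exact hyB₂ h
          · exact hyB₁ (hX h)

end PaperFormal
end

section
/- Let A and B be bases of a matroid M of rank r. There is no exchange-ordering between A and B (i.e., no bijection σ : A → B such that for every a ∈ A, both (A - {a}) ∪ {σ(a)} and (B - {σ(a)}) ∪ {a} are bases) if and only if there exist subsets X ⊆ A and Y ⊆ B with |X| + |Y| = r + 1 and 2 ≤ |X|, |Y|, such that for every x ∈ X and y ∈ Y, at least one of (A - {x}) ∪ {y} and (B - {y}) ∪ {x} fails to be a basis of M. -/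
open Set Matroid

namespace PaperFormal

variable {α β : Type*}

lemma base_encard {M : Matroid α} {r : ℕ} (hr : eRk M M.E = r) {A : Set α}
    (hA : M.IsBase A) : A.encard = r := by
  rw [← hr, eRk]
  apply le_antisymm
  · exact le_iSup₂_of_le A ⟨hA.indep, hA.subset_ground⟩ le_rfl
  · apply iSup₂_le
    rintro I ⟨hI, -⟩
    obtain ⟨B, hB, hIB⟩ := hI.exists_isBase_superset
    exact (encard_le_encard hIB).trans (hB.encard_eq_encard_of_isBase hA).le

/-- Symmetric basis exchange. -/
lemma symm_exchange {M : Matroid α} {A B : Set α} (hA : M.IsBase A) (hB : M.IsBase B)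
    {a : α} (ha : a ∈ A) :
    ∃ b ∈ B, M.IsBase ((A \ {a}) ∪ {b}) ∧ M.IsBase ((B \ {b}) ∪ {a}) := by
  by_cases haB : a ∈ B
  · refine ⟨a, haB, ?_, ?_⟩
    · rwa [union_singleton, insert_diff_singleton, insert_eq_of_mem ha]
    · rwa [union_singleton, insert_diff_singleton, insert_eq_of_mem haB]
  have haE : a ∈ M.E := hA.subset_ground ha
  have hAd : M.Indep (A \ {a}) := hA.indep.subset diff_subset
  have hins : insert a (A \ {a}) = A := by rw [insert_diff_singleton, insert_eq_of_mem ha]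
  have haH : a ∉ M.closure (A \ {a}) := by
    rw [hAd.notMem_closure_iff_of_notMem (by simp) haE, hins]
    exact hA.indep
  -- B is not contained in the hyperplane
  have hBH : ¬ (B ⊆ M.closure (A \ {a})) := by
    intro h
    have : M.E ⊆ M.closure (A \ {a}) := by
      rw [← hB.closure_eq]
      exact (M.closure_subset_closure h).trans (M.closure_closure _).subset
    exact haH (this haE)
  set S : Set α := B \ M.closure (A \ {a}) with hS
  have hSne : S.Nonempty := by
    rw [hS, diff_nonempty]; exact hBH
  have hkey : ∃ b ∈ S, a ∉ M.closure (B \ {b}) := by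
    by_contra h
    push_neg at h
    have hmem : a ∈ ⋂ b ∈ S, M.closure (B \ {b}) := by
      simp only [mem_iInter]; exact h
    have hUind : M.Indep (⋃ b ∈ S, (B \ {b})) := by
      refine hB.indep.subset ?_
      exact iUnion₂_subset fun b _ => diff_subset
    rw [← M.closure_biInter_eq_biInter_closure_of_biUnion_indep hSne hUind] at hmem
    have hIeq : (⋂ b ∈ S, (B \ {b})) = B \ S := by
      ext x
      simp only [mem_iInter, mem_diff, mem_singleton_iff]
      constructor
      · intro h'
        obtain ⟨b0, hb0⟩ := hSne
        refine ⟨(h' b0 hb0).1, fun hxS => (h' x hxS).2 rfl⟩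
      · rintro ⟨hxB, hxS⟩ b hbS
        exact ⟨hxB, fun hxb => hxS (hxb ▸ hbS)⟩
    rw [hIeq] at hmem
    have : B \ S ⊆ M.closure (A \ {a}) := fun x hx => by
      by_contra hxc
      exact hx.2 ⟨hx.1, hxc⟩
    have := (M.closure_subset_closure this).trans (M.closure_closure _).subset
    exact haH (this hmem)
  obtain ⟨b, hbS, hab⟩ := hkey
  have hbB : b ∈ B := hbS.1
  have hbA : b ∉ A := by
    intro hbA
    rcases eq_or_ne b a with rfl | hba
    · exact haB hbB
    · exact hbS.2 (M.subset_closure _ (hAd.subset_ground) ⟨hbA, hba⟩)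
  have hbE : b ∈ M.E := hB.subset_ground hbB
  refine ⟨b, hbB, ?_, ?_⟩
  · rw [union_singleton]
    refine hA.exchange_isBase_of_indep hbA ?_
    rw [hAd.insert_indep_iff_of_notMem (by simp [hbA])]
    exact ⟨hbE, hbS.2⟩
  · rw [union_singleton]
    refine hB.exchange_isBase_of_indep haB ?_
    have hBd : M.Indep (B \ {b}) := hB.indep.subset diff_subset
    rw [hBd.insert_indep_iff_of_notMem (by simp [haB])]
    exact ⟨haE, hab⟩

/-- bases `A`, `B` of a rank-`r` matroid have no exchange-ordering iff there
are `X ⊆ A`, `Y ⊆ B` with `|X| + |Y| = r + 1`, `|X|, |Y| ≥ 2`, such that for all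
`x ∈ X`, `y ∈ Y` at least one of the two single exchanges fails. -/
theorem no_exchangeOrdering_iff (M : Matroid α) (r : ℕ) (hr : eRk M M.E = r)
    (A B : Set α) (hA : M.IsBase A) (hB : M.IsBase B) :
    (¬ ∃ σ : α → α, Set.BijOn σ A B ∧
        ∀ a ∈ A, M.IsBase ((A \ {a}) ∪ {σ a}) ∧ M.IsBase ((B \ {σ a}) ∪ {a})) ↔
      ∃ X Y : Set α, X ⊆ A ∧ Y ⊆ B ∧ X.encard + Y.encard = r + 1 ∧
        2 ≤ X.encard ∧ 2 ≤ Y.encard ∧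
        ∀ x ∈ X, ∀ y ∈ Y,
          ¬ M.IsBase ((A \ {x}) ∪ {y}) ∨ ¬ M.IsBase ((B \ {y}) ∪ {x}) := by
  classical
  have hAcard : A.encard = r := base_encard hr hA
  have hBcard : B.encard = r := base_encard hr hB
  have hAfin : A.Finite := finite_of_encard_eq_coe hAcard
  have hBfin : B.Finite := finite_of_encard_eq_coe hBcard
  set good : α → α → Prop := fun x y =>
    M.IsBase ((A \ {x}) ∪ {y}) ∧ M.IsBase ((B \ {y}) ∪ {x}) with hgood_def
  set AF := hAfin.toFinset with hAF
  set BF := hBfin.toFinset with hBF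
  have hAFc : AF.card = r := by
    have := hAfin.encard_eq_coe_toFinset_card
    rw [hAcard] at this
    exact_mod_cast this.symm
  have hBFc : BF.card = r := by
    have := hBfin.encard_eq_coe_toFinset_card
    rw [hBcard] at this
    exact_mod_cast this.symm
  set NB : Finset α → Finset α := fun S => BF.filter (fun y => ∃ x ∈ S, good x y) with hNB
  have hNBsub : ∀ S, NB S ⊆ BF := fun S => Finset.filter_subset _ _
  have hNBmono : ∀ ⦃S T⦄, S ⊆ T → NB S ⊆ NB T := by
    intro S T hST y hy
    rw [hNB, Finset.mem_filter] at hy ⊢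
    obtain ⟨hyB, x, hx, hxy⟩ := hy
    exact ⟨hyB, x, hST hx, hxy⟩
  have hgoodA : ∀ a ∈ AF, ∃ y ∈ BF, good a y := by
    intro a haAF
    obtain ⟨b, hbB, h1, h2⟩ := symm_exchange hA hB (hAfin.mem_toFinset.mp haAF)
    exact ⟨b, hBfin.mem_toFinset.mpr hbB, h1, h2⟩
  have hgoodB : ∀ y ∈ BF, ∃ a ∈ AF, good a y := by
    intro y hyBF
    obtain ⟨a, haA, h1, h2⟩ := symm_exchange hB hA (hBfin.mem_toFinset.mp hyBF)
    exact ⟨a, hAfin.mem_toFinset.mpr haA, h2, h1⟩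
  constructor
  · -- hard direction
    intro hno
    set t : ↥AF → Finset α := fun a => BF.filter (fun y => good ↑a y) with ht
    by_cases hHall : ∀ s : Finset ↥AF, s.card ≤ (s.biUnion t).card
    · exfalso
      obtain ⟨f, hfinj, hft⟩ := (Finset.all_card_le_biUnion_card_iff_exists_injective t).mp hHall
      set σ : α → α := fun x => if h : x ∈ AF then f ⟨x, h⟩ else x with hσ
      have hσgood : ∀ a ∈ A, good a (σ a) ∧ σ a ∈ B := by
        intro a haA
        have haAF : a ∈ AF := hAfin.mem_toFinset.mpr haA
        have := hft ⟨a, haAF⟩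
        rw [ht, Finset.mem_filter] at this
        have hσa : σ a = f ⟨a, haAF⟩ := by rw [hσ]; simp [haAF]
        rw [hσa]
        exact ⟨this.2, hBfin.mem_toFinset.mp this.1⟩
      have hinjA : Set.InjOn σ A := by
        intro x hx y hy hxy
        have hxAF : x ∈ AF := hAfin.mem_toFinset.mpr hx
        have hyAF : y ∈ AF := hAfin.mem_toFinset.mpr hy
        rw [hσ] at hxy
        simp only [hxAF, hyAF, dif_pos] at hxy
        exact Subtype.mk_eq_mk.mp (hfinj hxy)
      have hmaps : Set.MapsTo σ A B := fun a ha => (hσgood a ha).2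
      have hsurj : Set.SurjOn σ A B := by
        have himg : AF.image σ ⊆ BF := by
          intro y hy
          obtain ⟨x, hx, rfl⟩ := Finset.mem_image.mp hy
          exact hBfin.mem_toFinset.mpr ((hσgood x (hAfin.mem_toFinset.mp hx)).2)
        have hcard : (AF.image σ).card = AF.card :=
          Finset.card_image_of_injOn (fun x hx y hy h =>
            hinjA (hAfin.mem_toFinset.mp hx) (hAfin.mem_toFinset.mp hy) h)
        have : AF.image σ = BF :=
          Finset.eq_of_subset_of_card_le himg (by rw [hcard, hAFc, hBFc])
        intro b hb
        have : b ∈ AF.image σ := this ▸ hBfin.mem_toFinset.mpr hb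
        obtain ⟨a, ha, rfl⟩ := Finset.mem_image.mp this
        exact ⟨a, hAfin.mem_toFinset.mp ha, rfl⟩
      exact hno ⟨σ, ⟨hmaps, hinjA, hsurj⟩, fun a ha => (hσgood a ha).1⟩
    · push_neg at hHall
      obtain ⟨s, hs⟩ := hHall
      -- translate to a violator S ⊆ AF
      have hviol : ∃ S ∈ AF.powerset.filter (fun S => (NB S).card < S.card), True := by
        refine ⟨s.image Subtype.val, ?_, trivial⟩
        rw [Finset.mem_filter, Finset.mem_powerset]
        constructor
        · intro x hx
          obtain ⟨a, _, rfl⟩ := Finset.mem_image.mp hx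
          exact a.2
        · have h1 : (s.image Subtype.val).card = s.card :=
            Finset.card_image_of_injective s Subtype.val_injective
          have h2 : NB (s.image Subtype.val) = s.biUnion t := by
            ext y
            rw [hNB]
            simp only [Finset.mem_filter, Finset.mem_biUnion, ht, Finset.mem_image]
            constructor
            · rintro ⟨hyB, x, ⟨a, has, rfl⟩, hxy⟩
              exact ⟨a, has, hyB, hxy⟩
            · rintro ⟨a, has, hyB, hxy⟩
              exact ⟨hyB, a, ⟨a, has, rfl⟩, hxy⟩
          rw [h1, h2]
          exact hs
      obtain ⟨S₁, hS₁mem, -⟩ := hviol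
      obtain ⟨S₀, hS₀mem, hS₀min⟩ := Finset.exists_min_image
        (AF.powerset.filter (fun S => (NB S).card < S.card)) Finset.card ⟨S₁, hS₁mem⟩
      rw [Finset.mem_filter, Finset.mem_powerset] at hS₀mem
      obtain ⟨hS₀A, hS₀v⟩ := hS₀mem
      -- card ≥ 2
      have hS₀card2 : 2 ≤ S₀.card := by
        rcases Nat.lt_or_ge S₀.card 2 with h | h
        · exfalso
          interval_cases h' : S₀.card
          · omega
          · obtain ⟨a, rfl⟩ := Finset.card_eq_one.mp h'
            obtain ⟨y, hyB, hgy⟩ := hgoodA a (hS₀A (Finset.mem_singleton_self a))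
            have : y ∈ NB {a} := Finset.mem_filter.mpr ⟨hyB, a, Finset.mem_singleton_self a, hgy⟩
            have := Finset.card_pos.mpr ⟨y, this⟩
            omega
        · exact h
      have hS₀ne : S₀.Nonempty := Finset.card_pos.mp (by omega)
      -- card (NB S₀) = S₀.card - 1
      have hNBcard : (NB S₀).card = S₀.card - 1 := by
        obtain ⟨a, haS₀⟩ := hS₀ne
        have herase : ¬ ((NB (S₀.erase a)).card < (S₀.erase a).card) := by
          intro hco
          have hmem : S₀.erase a ∈ AF.powerset.filter (fun S => (NB S).card < S.card) := by
            rw [Finset.mem_filter, Finset.mem_powerset]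
            exact ⟨(Finset.erase_subset a S₀).trans hS₀A, hco⟩
          have hm := hS₀min _ hmem
          have he := Finset.card_erase_of_mem haS₀
          omega
        push_neg at herase
        have h1 : (S₀.erase a).card ≤ (NB S₀).card :=
          herase.trans (Finset.card_le_card (hNBmono (Finset.erase_subset a S₀)))
        have := Finset.card_erase_of_mem haS₀
        omega
      -- S₀ ≠ AF, so card ≤ r - 1
      have hS₀lt : S₀.card < r := by
        rcases Nat.lt_or_ge S₀.card r with h | h
        · exact h
        · exfalso
          have hSA : S₀ = AF := Finset.eq_of_subset_of_card_le hS₀A (by omega)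
          have hcc : S₀.card = r := by rw [hSA, hAFc]
          have hxy : ¬ (BF ⊆ NB S₀) := by
            intro hsub
            have := Finset.card_le_card hsub
            omega
          obtain ⟨y, hyB, hyN⟩ := Finset.not_subset.mp hxy
          obtain ⟨x, hxA, hgxy⟩ := hgoodB y hyB
          exact hyN (Finset.mem_filter.mpr ⟨hyB, x, hSA ▸ hxA, hgxy⟩)
      -- define X and Y
      refine ⟨(S₀ : Set α), ((BF \ NB S₀ : Finset α) : Set α), ?_, ?_, ?_, ?_, ?_, ?_⟩
      · intro x hx
        exact hAfin.mem_toFinset.mp (hS₀A hx)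
      · intro y hy
        have : y ∈ BF := (Finset.sdiff_subset) hy
        exact hBfin.mem_toFinset.mp this
      · rw [Set.encard_coe_eq_coe_finsetCard, Set.encard_coe_eq_coe_finsetCard,
          Finset.card_sdiff_of_subset (hNBsub S₀), hBFc, hNBcard]
        have : S₀.card + (r - (S₀.card - 1)) = r + 1 := by omega
        exact_mod_cast congrArg (Nat.cast : ℕ → ℕ∞) this
      · rw [Set.encard_coe_eq_coe_finsetCard]
        exact_mod_cast hS₀card2
      · rw [Set.encard_coe_eq_coe_finsetCard, Finset.card_sdiff_of_subset (hNBsub S₀), hBFc, hNBcard]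
        have : 2 ≤ r - (S₀.card - 1) := by omega
        exact_mod_cast this
      · intro x hx y hy
        by_contra hc
        push_neg at hc
        simp only [Finset.coe_sdiff, mem_diff, Finset.mem_coe] at hy
        exact hy.2 (Finset.mem_filter.mpr ⟨hy.1, x, hx, hc.1, hc.2⟩)
  · -- easy direction
    rintro ⟨X, Y, hXA, hYB, hsum, hX2, hY2, hbad⟩ ⟨σ, hbij, hgood2⟩
    have himg : σ '' X ⊆ B := (Set.image_mono hXA).trans hbij.image_eq.subset
    have hIcard : (σ '' X).encard = X.encard :=
      Set.InjOn.encard_image (hbij.injOn.mono hXA)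
    have hnd : ¬ Disjoint (σ '' X) Y := by
      intro hd
      have h1 : (σ '' X ∪ Y).encard = (r : ℕ∞) + 1 := by
        rw [Set.encard_union_eq hd, hIcard, hsum]
      have h2 : (σ '' X ∪ Y).encard ≤ B.encard :=
        Set.encard_le_encard (Set.union_subset himg hYB)
      rw [h1, hBcard] at h2
      have : r + 1 ≤ r := by exact_mod_cast h2
      omega
    obtain ⟨y, hyI, hyY⟩ := Set.not_disjoint_iff.mp hnd
    obtain ⟨x, hxX, rfl⟩ := hyI
    obtain ⟨h1, h2⟩ := hgood2 x (hXA hxX)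
    rcases hbad x hxX (σ x) hyY with h | h
    · exact h h1
    · exact h h2

end PaperFormal
end

section
/- Let M be a matroid with rank function r, let e₁,…,eₙ be distinct elements not in E(M), and let F₁,…,Fₙ ⊆ E(M). Define M₀ = M and M_{i+1} = M_i +_{F_{i+1}} e_{i+1}. Then for every i, every X ⊆ E(M), and every J ⊆ {1,…,i}, the rank in M_i satisfies r_i(X ∪ {e_j : j ∈ J}) = min over I ⊆ J of ( r(X ∪ ⋃_{j∈I} F_j) + |J - I| ). In particular, the result of the sequence of principal extensions does not depend on the order in which they are performed. -/
open Set Matroid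

namespace PaperFormal

variable {α β : Type*}

private lemma inf_add_const {β : Type*} (s : Finset β) (hs : s.Nonempty) (f : β → ℕ∞) (c : ℕ∞) :
    s.inf f + c = s.inf (fun b => f b + c) := by
  apply le_antisymm
  · exact Finset.le_inf fun b hb => add_le_add_left (Finset.inf_le hb) c
  · obtain ⟨b, hb, hbeq⟩ := s.exists_mem_eq_inf hs f
    calc s.inf (fun b => f b + c) ≤ f b + c := Finset.inf_le hb
    _ = s.inf f + c := by rw [← hbeq]

/-- the rank function of an iterated sequence of principal extensions:
`r_i(X ∪ e_J) = min_{I ⊆ J} (r(X ∪ F_I) + |J - I|)`.  In particular, the result of a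
sequence of principal extensions does not depend on the order. -/
theorem iterated_principalExt_rank (M : Matroid α) (n : ℕ)
    (e : Fin n → α) (F : Fin n → Set α)
    (he_inj : Function.Injective e) (he : ∀ i, e i ∉ M.E) (hF : ∀ i, F i ⊆ M.E)
    (Ms : Fin (n + 1) → Matroid α) (h0 : Ms 0 = M)
    (hstep : ∀ i : Fin n, IsPrincipalExt (Ms i.castSucc) (F i) (e i) (Ms i.succ)) :
    ∀ (i : Fin (n + 1)) (X : Set α) (J : Finset (Fin n)), X ⊆ M.E →
      (∀ j ∈ J, (j : ℕ) < (i : ℕ)) →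
      eRk (Ms i) (X ∪ (e '' (↑J : Set (Fin n)))) =
        J.powerset.inf
          (fun I => eRk M (X ∪ ⋃ j ∈ I, F j) + ((J.card - I.card : ℕ) : ℕ∞)) := by
  classical
  have hE : ∀ i : Fin (n + 1), (Ms i).E = M.E ∪ e '' {j : Fin n | (j : ℕ) < (i : ℕ)} := by
    intro i
    induction i using Fin.induction with
    | zero => simp [h0]
    | succ i ih =>
      rw [(hstep i).2.1, ih]
      have hset : {j : Fin n | (j : ℕ) < (i.succ : ℕ)}
          = insert i {j : Fin n | (j : ℕ) < (i.castSucc : ℕ)} := by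
        ext j
        simp only [Fin.val_succ, Fin.coe_castSucc, Set.mem_setOf_eq, Set.mem_insert_iff,
          Nat.lt_succ_iff_lt_or_eq]
        constructor
        · rintro (h | h)
          · exact Or.inr h
          · exact Or.inl (Fin.ext h)
        · rintro (h | h)
          · exact Or.inr (by rw [h])
          · exact Or.inl h
      rw [hset, Set.image_insert_eq, Set.union_insert]
  intro i
  induction i using Fin.induction with
  | zero =>
    intro X J hX hJ
    have hJ0 : J = ∅ := by
      apply Finset.eq_empty_of_forall_notMem
      intro j hj
      exact absurd (hJ j hj) (by simp)
    subst hJ0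
    simp [h0]
  | succ i ih =>
    intro X J hX hJ
    by_cases hiJ : i ∈ J
    · -- case `i ∈ J`
      set J' := J.erase i with hJ'def
      have hiJ' : i ∉ J' := Finset.notMem_erase _ _
      have hJins : J = insert i J' := (Finset.insert_erase hiJ).symm
      have hJ'lt : ∀ j ∈ J', (j : ℕ) < (i.castSucc : ℕ) := by
        intro j hj
        have hne : j ≠ i := Finset.ne_of_mem_erase hj
        have := hJ j (Finset.mem_of_mem_erase hj)
        rw [Fin.val_succ, Nat.lt_succ_iff_lt_or_eq] at this
        rcases this with h | h
        · simpa using h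
        · exact absurd (Fin.ext h) hne
      have hX' : X ∪ e '' (↑J' : Set (Fin n)) ⊆ (Ms i.castSucc).E := by
        rw [hE]
        apply Set.union_subset (hX.trans Set.subset_union_left)
        refine (Set.image_mono ?_).trans Set.subset_union_right
        intro j hj
        exact hJ'lt j hj
      have key := (hstep i).2.2.2 (X ∪ e '' (↑J' : Set (Fin n))) hX'
      have hset : X ∪ e '' (↑J : Set (Fin n))
          = insert (e i) (X ∪ e '' (↑J' : Set (Fin n))) := by
        rw [hJins, Finset.coe_insert, Set.image_insert_eq, Set.union_insert]
      rw [hset, key]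
      have h1 : eRk (Ms i.castSucc) (X ∪ e '' (↑J' : Set (Fin n)))
          = J'.powerset.inf
            (fun I => eRk M (X ∪ ⋃ j ∈ I, F j) + ((J'.card - I.card : ℕ) : ℕ∞)) :=
        ih X J' hX hJ'lt
      have h2 : eRk (Ms i.castSucc) (X ∪ e '' (↑J' : Set (Fin n)) ∪ F i)
          = J'.powerset.inf
            (fun I => eRk M (X ∪ F i ∪ ⋃ j ∈ I, F j) + ((J'.card - I.card : ℕ) : ℕ∞)) := by
        rw [Set.union_right_comm]
        exact ih (X ∪ F i) J' (Set.union_subset hX (hF i)) hJ'lt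
      rw [h1, h2, hJins, Finset.powerset_insert, Finset.inf_union, Finset.inf_image]
      congr 1
      · -- `inf f + 1 = inf (g)` over `J'.powerset`
        rw [inf_add_const _ J'.powerset_nonempty _ 1]
        apply Finset.inf_congr rfl
        intro I hI
        have hIsub : I ⊆ J' := Finset.mem_powerset.1 hI
        have hcard : I.card ≤ J'.card := Finset.card_le_card hIsub
        rw [Finset.card_insert_of_notMem hiJ', Nat.succ_sub hcard]
        push_cast
        ring
      · apply Finset.inf_congr rfl
        intro I hI
        have hIsub : I ⊆ J' := Finset.mem_powerset.1 hI
        have hiI : i ∉ I := fun h => hiJ' (hIsub h)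
        simp only [Function.comp_apply]
        rw [Finset.set_biUnion_insert, Finset.card_insert_of_notMem hiJ',
          Finset.card_insert_of_notMem hiI, Nat.succ_sub_succ, ← Set.union_assoc]
    · -- case `i ∉ J`
      have hJlt : ∀ j ∈ J, (j : ℕ) < (i.castSucc : ℕ) := by
        intro j hj
        have hne : j ≠ i := fun h => hiJ (h ▸ hj)
        have := hJ j hj
        rw [Fin.val_succ, Nat.lt_succ_iff_lt_or_eq] at this
        rcases this with h | h
        · simpa using h
        · exact absurd (Fin.ext h) hne
      have hsub : X ∪ e '' (↑J : Set (Fin n)) ⊆ (Ms i.castSucc).E := by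
        rw [hE]
        apply Set.union_subset (hX.trans Set.subset_union_left)
        refine (Set.image_mono ?_).trans Set.subset_union_right
        intro j hj
        exact hJlt j hj
      rw [(hstep i).2.2.1 _ hsub]
      exact ih X J hX hJlt

end PaperFormal
end

section
/- Let M' be obtained from a matroid M by relaxing a circuit-hyperplane X of M. If M is base-orderable, then M' is base-orderable. -/
open Set Matroid

namespace PaperFormal

variable {α β : Type*}

lemma flat_closure (M : Matroid α) (S : Set α) : M.IsFlat (M.closure S) := by
  constructor
  · intro I X hIF hIX
    have h2 := hIX.subset_closure
    rwa [hIF.closure_eq_closure, closure_closure] at h2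
  · exact M.closure_subset_ground S

-- every exchange ordering fixes the intersection
lemma fixes_inter {M : Matroid α} {B B' : Set α} {σ : α → α}
    (hB : M.IsBase B) (hbij : Set.BijOn σ B B')
    (hex : ∀ x ∈ B, M.IsBase ((B \ {x}) ∪ {σ x})) {z : α} (hzB : z ∈ B) (hzB' : z ∈ B') :
    σ z = z := by
  obtain ⟨u, huB, huz⟩ := hbij.surjOn hzB'
  by_contra hne
  have huz' : u ≠ z := by rintro rfl; rw [huz] at hne; exact hne rfl
  have h1 : (B \ {u}) ∪ {σ u} = B \ {u} := by
    rw [huz, union_singleton, insert_eq_of_mem (show z ∈ B \ {u} from ⟨hzB, fun h ↦ huz' (by simpa using h.symm)⟩)]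
  have h2 := hex u huB
  rw [h1] at h2
  have h3 := h2.eq_of_subset_isBase hB diff_subset
  exact (h3 ▸ huB).2 rfl

lemma closure_circ_hyp {M : Matroid α} {X : Set α} (hXc : Circuit M X) (hXh : Hyperplane M X)
    {y : α} (hy : y ∈ X) : M.closure (X \ {y}) = X := by
  have hXs : X ⊆ M.E := hXc.1.subset_ground
  have hind : M.Indep (X \ {y}) := hXc.2 _ (sdiff_singleton_ssubset.2 hy)
  refine subset_antisymm ((M.closure_subset_closure diff_subset).trans_eq hXh.1.closure) ?_
  intro x hx
  by_cases hxy : x = y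
  · subst hxy
    by_contra hcl
    have : M.Indep (insert x (X \ {x})) := hind.insert_indep_iff.2
      (Or.inl ⟨hXs hx, fun h ↦ hcl (by simpa using h)⟩)
    rw [insert_diff_singleton, insert_eq_of_mem hx] at this
    exact hXc.1.not_indep this
  · exact M.subset_closure _ hind.subset_ground ⟨hx, hxy⟩

lemma key_base {M : Matroid α} {X : Set α} (hXc : Circuit M X) (hXh : Hyperplane M X)
    {y e : α} (hy : y ∈ X) (heE : e ∈ M.E) (heX : e ∉ X) :
    M.IsBase ((X \ {y}) ∪ {e}) := by
  have hind : M.Indep (X \ {y}) := hXc.2 _ (sdiff_singleton_ssubset.2 hy)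
  have hcl := closure_circ_hyp hXc hXh hy
  have hind2 : M.Indep (insert e (X \ {y})) :=
    hind.insert_indep_iff.2 (Or.inl ⟨heE, by rw [hcl]; exact heX⟩)
  rw [union_singleton]
  refine hind2.isBase_of_spanning ?_
  rw [spanning_iff_closure_eq hind2.subset_ground]
  have h1 : M.closure (insert e (X \ {y})) = M.closure (insert e X) := by
    calc M.closure (insert e (X \ {y})) = M.closure (insert e (M.closure (X \ {y}))) :=
          (M.closure_insert_closure_eq_closure_insert e _).symm
      _ = M.closure (insert e X) := by rw [hcl]
  rw [h1]
  refine hXh.2.2 _ (flat_closure M _) ⟨?_, fun hsub ↦ heX (hsub (M.subset_closure _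
    (insert_subset heE hXc.1.subset_ground) (mem_insert e X)))⟩
  calc X = M.closure X := hXh.1.closure.symm
    _ ⊆ M.closure (insert e X) := M.closure_subset_closure (subset_insert e X)

lemma mixed {M M' : Matroid α} {X : Set α} (hXc : Circuit M X) (hXh : Hyperplane M X)
    (hBase : ∀ B, M'.IsBase B ↔ (M.IsBase B ∨ B = X)) (hM : BaseOrderable M)
    {B : Set α} (hB : M.IsBase B) :
    ∃ τ : α → α, Set.BijOn τ B X ∧
      ∀ b ∈ B, M'.IsBase ((B \ {b}) ∪ {τ b}) ∧ M'.IsBase ((X \ {τ b}) ∪ {b}) := by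
  have hXs : X ⊆ M.E := hXc.1.subset_ground
  have hBs : B ⊆ M.E := hB.subset_ground
  -- there is an element of B outside X
  obtain ⟨e, heB, heX⟩ : (B \ X).Nonempty := by
    rw [nonempty_iff_ne_empty]
    intro hemp
    have hBX : B ⊆ X := diff_eq_empty.1 hemp
    have : M.E ⊆ X := by
      calc M.E = M.closure B := hB.closure_eq.symm
        _ ⊆ M.closure X := M.closure_subset_closure hBX
        _ = X := hXh.1.closure
    exact hXh.2.1 (subset_antisymm hXs this)
  -- find y₀
  obtain ⟨y₀, hy₀X, hy₀B, hy₀base⟩ :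
      ∃ y₀, y₀ ∈ X ∧ y₀ ∉ B ∧ M'.IsBase ((B \ {e}) ∪ {y₀}) := by
    by_cases hc : ∃ y ∈ X, y ∉ M.closure (B \ {e})
    · obtain ⟨y₀, hyX, hycl⟩ := hc
      have hyB : y₀ ∉ B := by
        intro hyB
        have hye : y₀ ≠ e := fun h ↦ heX (h ▸ hyX)
        exact hycl (M.subset_closure _ ((diff_subset).trans hBs) ⟨hyB, hye⟩)
      have hind : M.Indep (insert y₀ (B \ {e})) :=
        (hB.indep.subset diff_subset).insert_indep_iff.2 (Or.inl ⟨hXs hyX, hycl⟩)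
      refine ⟨y₀, hyX, hyB, ?_⟩
      rw [union_singleton]
      exact (hBase _).2 (Or.inl (hB.exchange_isBase_of_indep hyB hind))
    · push_neg at hc
      -- X ⊆ closure (B \ {e}), so closure (B \ {e}) = X
      have hclne : M.closure (B \ {e}) ≠ M.E := by
        intro hcl
        have hsp : M.Spanning (B \ {e}) := by
          rw [spanning_iff_closure_eq ((diff_subset).trans hBs)]; exact hcl
        have hbase := (hB.indep.subset diff_subset).isBase_of_spanning hsp
        have := hbase.eq_of_subset_isBase hB diff_subset
        exact (this ▸ heB).2 rfl
      have hclX : M.closure (B \ {e}) = X := by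
        by_contra hne
        exact hclne (hXh.2.2 _ (flat_closure M _) ⟨hc, fun h ↦ hne (subset_antisymm h hc)⟩)
      have hBe : B \ {e} ⊆ X := hclX ▸ M.subset_closure _ ((diff_subset).trans hBs)
      have hBXe : B \ X = {e} := by
        apply subset_antisymm
        · rintro x ⟨hxB, hxX⟩
          by_contra hxe
          exact hxX (hBe ⟨hxB, hxe⟩)
        · rintro x rfl; exact ⟨heB, heX⟩
      have hXB : (X \ B).encard = 1 := by
        have hXb' : M'.IsBase X := (hBase X).2 (Or.inr rfl)
        have hBb' : M'.IsBase B := (hBase B).2 (Or.inl hB)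
        rw [hXb'.encard_diff_comm hBb', hBXe, encard_singleton]
      obtain ⟨y₀, hy₀⟩ := encard_eq_one.1 hXB
      have hy₀X : y₀ ∈ X := by have : y₀ ∈ X \ B := hy₀ ▸ rfl; exact this.1
      have hy₀B : y₀ ∉ B := by have : y₀ ∈ X \ B := hy₀ ▸ rfl; exact this.2
      refine ⟨y₀, hy₀X, hy₀B, ?_⟩
      have hXeq : (B \ {e}) ∪ {y₀} = X := by
        apply subset_antisymm
        · rintro x (hx | rfl)
          · exact hBe hx
          · exact hy₀X
        · intro x hxX
          by_cases hxB : x ∈ B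
          · have hxe : x ≠ e := fun h ↦ heX (h ▸ hxX)
            exact Or.inl ⟨hxB, hxe⟩
          · have : x ∈ X \ B := ⟨hxX, hxB⟩
            rw [hy₀] at this
            exact Or.inr this
      rw [hXeq]
      exact (hBase X).2 (Or.inr rfl)
  -- the auxiliary base B'
  set B' : Set α := (X \ {y₀}) ∪ {e} with hB'def
  have hB' : M.IsBase B' := key_base hXc hXh hy₀X (hBs heB) heX
  obtain ⟨σ, hσbij, hσ⟩ := hM B B' hB hB'
  have hfix : ∀ z ∈ B, z ∈ B' → σ z = z :=
    fun z hz hz' ↦ fixes_inter hB hσbij (fun x hx ↦ (hσ x hx).1) hz hz'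
  have heB' : e ∈ B' := Or.inr rfl
  have hσe : σ e = e := hfix e heB heB'
  have hy₀B' : y₀ ∉ B' := by
    rintro (h | h)
    · exact h.2 rfl
    · exact heX (mem_singleton_iff.1 h ▸ hy₀X)
  -- σ b facts for b ≠ e
  have hσmem : ∀ b ∈ B, b ≠ e → σ b ∈ X \ {y₀} := by
    intro b hb hbe
    have h1 : σ b ∈ B' := hσbij.mapsTo hb
    rcases h1 with h1 | h1
    · exact h1
    · exact absurd (hσbij.injOn hb heB (by rw [hσe]; exact mem_singleton_iff.1 h1)) hbe
  have hσfixX : ∀ b ∈ B, b ∈ X → σ b = b := by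
    intro b hb hbX
    refine hfix b hb (Or.inl ⟨hbX, ?_⟩)
    exact fun h ↦ hy₀B (mem_singleton_iff.1 h ▸ hb)
  classical
  refine ⟨fun b ↦ if b = e then y₀ else σ b, ⟨?_, ?_, ?_⟩, ?_⟩
  · -- MapsTo
    intro b hb
    by_cases hbe : b = e
    · simpa [hbe] using hy₀X
    · simpa [hbe] using (hσmem b hb hbe).1
  · -- InjOn
    intro a ha b hb hab
    by_cases hae : a = e <;> by_cases hbe : b = e
    · rw [hae, hbe]
    · simp only [hae, if_pos, if_neg hbe, ite_true] at hab
      exact absurd hab.symm (fun h ↦ (hσmem b hb hbe).2 (by rw [h]; rfl))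
    · simp only [hbe, if_pos, if_neg hae, ite_true] at hab
      exact absurd hab (fun h ↦ (hσmem a ha hae).2 (by rw [h]; rfl))
    · simp only [if_neg hae, if_neg hbe] at hab
      exact hσbij.injOn ha hb hab
  · -- SurjOn
    intro y hyX
    by_cases hyy : y = y₀
    · exact ⟨e, heB, by simp [hyy]⟩
    · have hyB' : y ∈ B' := Or.inl ⟨hyX, hyy⟩
      obtain ⟨b, hbB, hby⟩ := hσbij.surjOn hyB'
      have hbe : b ≠ e := by
        rintro rfl
        rw [hσe] at hby
        exact heX (hby ▸ hyX)
      exact ⟨b, hbB, by simp [hbe, hby]⟩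
  · -- exchange conditions
    intro b hb
    by_cases hbe : b = e
    · subst hbe
      simp only [if_pos]
      constructor
      · simpa using hy₀base
      · exact (hBase _).2 (Or.inl hB')
    · by_cases hbX : b ∈ X
      · have : σ b = b := hσfixX b hb hbX
        simp only [if_neg hbe, this]
        constructor
        · rw [union_singleton, insert_diff_singleton, insert_eq_of_mem hb]
          exact (hBase B).2 (Or.inl hB)
        · rw [union_singleton, insert_diff_singleton, insert_eq_of_mem hbX]
          exact (hBase X).2 (Or.inr rfl)
      · simp only [if_neg hbe]
        constructor
        · exact (hBase _).2 (Or.inl (hσ b hb).1)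
        · exact (hBase _).2 (Or.inl (key_base hXc hXh (hσmem b hb hbe).1 (hBs hb) hbX))


/-- relaxing a circuit-hyperplane of a base-orderable matroid yields a
base-orderable matroid. -/
theorem baseOrderable_relaxation (M M' : Matroid α) (X : Set α)
    (hXc : Circuit M X) (hXh : Hyperplane M X)
    (hE : M'.E = M.E) (hBase : ∀ B, M'.IsBase B ↔ (M.IsBase B ∨ B = X))
    (hM : BaseOrderable M) : BaseOrderable M' := by
  intro B₁ B₂ h1 h2
  rw [hBase] at h1 h2
  obtain ⟨y, hyX⟩ := hXc.1.nonempty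
  haveI : Nonempty α := ⟨y⟩
  rcases h1 with h1 | rfl
  · rcases h2 with h2 | rfl
    · obtain ⟨σ, hbij, hσ⟩ := hM B₁ B₂ h1 h2
      exact ⟨σ, hbij, fun x hx ↦ ⟨(hBase _).2 (Or.inl (hσ x hx).1),
        (hBase _).2 (Or.inl (hσ x hx).2)⟩⟩
    · obtain ⟨τ, hbij, hτ⟩ := mixed hXc hXh hBase hM h1
      exact ⟨τ, hbij, hτ⟩
  · rcases h2 with h2 | rfl
    · obtain ⟨τ, hbij, hτ⟩ := mixed hXc hXh hBase hM h2
      set g : α → α := Function.invFunOn τ B₂ with hg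
      have hinv : Set.InvOn g τ B₂ B₁ := hbij.invOn_invFunOn
      have hgbij : Set.BijOn g B₁ B₂ := hbij.symm ⟨hinv.2, hinv.1⟩
      refine ⟨g, hgbij, fun x hx ↦ ?_⟩
      have hgx : g x ∈ B₂ := hgbij.mapsTo hx
      have hτg : τ (g x) = x := hinv.2 hx
      have h := hτ (g x) hgx
      rw [hτg] at h
      exact ⟨h.2, h.1⟩
    · refine ⟨id, Set.bijOn_id B₂, fun x hx ↦ ?_⟩
      have hXX : M'.IsBase B₂ := (hBase B₂).2 (Or.inr rfl)
      simp only [id_eq, union_singleton, insert_diff_singleton, insert_eq_of_mem hx]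
      exact ⟨hXX, hXX⟩


end PaperFormal
end

section
/- A matroid N on the same ground set as M is freer than M (i.e., r_M(X) ≤ r_N(X) for all X) if and only if for every cyclic flat F of N there is a cyclic flat A of M with r_M(A) + |F - A| ≤ r_N(F). -/
open Set Matroid

namespace PaperFormal

variable {α β : Type*}

lemma le_eRk {M : Matroid α} {I X : Set α} (hI : M.Indep I) (hIX : I ⊆ X) :
    I.encard ≤ eRk M X :=
  le_iSup₂ (f := fun I (_ : I ∈ {I | M.Indep I ∧ I ⊆ X}) => I.encard) I ⟨hI, hIX⟩

lemma eRk_le_iff {M : Matroid α} {X : Set α} {c : ℕ∞} :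
    eRk M X ≤ c ↔ ∀ I, M.Indep I → I ⊆ X → I.encard ≤ c := by
  constructor
  · intro h I hI hIX
    exact (le_eRk hI hIX).trans h
  · intro h
    exact iSup₂_le fun I hI => h I hI.1 hI.2

lemma eRk_basis' {M : Matroid α} {I X : Set α} (hI : M.IsBasis' I X) :
    eRk M X = I.encard := by
  refine le_antisymm (eRk_le_iff.2 fun J hJ hJX => ?_) (le_eRk hI.indep hI.subset)
  obtain ⟨J', hJ', hJJ'⟩ := hJ.subset_isBasis'_of_subset hJX
  exact (encard_mono hJJ').trans (hJ'.encard_eq_encard hI).le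

lemma eRk_mono {M : Matroid α} {X Y : Set α} (h : X ⊆ Y) : eRk M X ≤ eRk M Y :=
  eRk_le_iff.2 fun I hI hIX => le_eRk hI (hIX.trans h)

lemma eRk_closure {M : Matroid α} (X : Set α) : eRk M (M.closure X) = eRk M X := by
  obtain ⟨I, hI⟩ := M.exists_isBasis' X
  rw [eRk_basis' hI, eRk_basis' hI.isBasis_closure_right.isBasis']

lemma eRk_union_le {M : Matroid α} (S T : Set α) :
    eRk M (S ∪ T) ≤ eRk M S + T.encard := by
  refine eRk_le_iff.2 fun I hI hIX => ?_
  calc I.encard = ((I ∩ S) ∪ (I \ S)).encard := by rw [inter_union_diff]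
    _ ≤ (I ∩ S).encard + (I \ S).encard := encard_union_le _ _
    _ ≤ eRk M S + T.encard := by
        refine add_le_add (le_eRk (hI.inter_right S) inter_subset_right)
          (encard_mono fun x hx => ?_)
        rcases hIX hx.1 with h | h
        · exact absurd h hx.2
        · exact h

lemma eRk_le_add_diff {M : Matroid α} (A X : Set α) :
    eRk M X ≤ eRk M A + (X \ A).encard := by
  calc eRk M X = eRk M ((X ∩ A) ∪ (X \ A)) := by rw [inter_union_diff]
    _ ≤ eRk M (X ∩ A) + (X \ A).encard := eRk_union_le _ _
    _ ≤ eRk M A + (X \ A).encard := add_le_add_left (eRk_mono inter_subset_right) _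

/-- Key lemma: the rank of `X` is attained (from below) at a cyclic flat. -/
lemma exists_cyclicFlat_le (M : Matroid α) (X : Set α) (hX : X ⊆ M.E) :
    ∃ A, CyclicFlat M A ∧ eRk M A + (X \ A).encard ≤ eRk M X := by
  set S := M.closure X with hS
  have hXS : X ⊆ S := M.subset_closure X hX
  have hSE : S ⊆ M.E := M.closure_subset_ground X
  set C := {e ∈ S | e ∉ M.closure (S \ {e})} with hC
  set A := S \ C with hA
  have hAS : A ⊆ S := diff_subset
  have hAE : A ⊆ M.E := hAS.trans hSE
  -- C ⊆ X
  have hCX : C ⊆ X := by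
    intro e he
    by_contra heX
    have hXS' : X ⊆ S \ {e} := subset_diff_singleton hXS heX
    have : e ∈ M.closure (S \ {e}) := by
      have h1 : S ⊆ M.closure (S \ {e}) := by
        rw [hS]
        calc M.closure X ⊆ M.closure (M.closure (S \ {e})) :=
              M.closure_subset_closure (hXS'.trans (M.subset_closure _ (diff_subset.trans hSE)))
          _ = M.closure (S \ {e}) := M.closure_closure _
      exact h1 he.1
    exact he.2 this
  -- every independent subset of S stays independent after adding C
  have hunion : ∀ I, M.Indep I → I ⊆ S → M.Indep (I ∪ C) := by
    intro I hI hIS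
    obtain ⟨B, hB, hIB⟩ := hI.subset_isBasis_of_subset hIS hSE
    have hCB : C ⊆ B := by
      intro c hc
      by_contra hcB
      have hBc : B ⊆ S \ {c} := subset_diff_singleton hB.subset hcB
      have : c ∈ M.closure (S \ {c}) :=
        M.closure_subset_closure hBc (hB.subset_closure hc.1)
      exact hc.2 this
    exact hB.indep.subset (union_subset hIB hCB)
  -- A is a flat
  have hAcl : M.closure A = A := by
    refine le_antisymm ?_ (M.subset_closure A hAE)
    intro e he
    have heS : e ∈ S := by
      have : M.closure A ⊆ S := by
        rw [hS]
        calc M.closure A ⊆ M.closure (M.closure X) := M.closure_subset_closure hAS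
          _ = M.closure X := M.closure_closure _
      exact this he
    refine ⟨heS, fun heC => ?_⟩
    have hAe : A ⊆ S \ {e} := subset_diff_singleton hAS (fun h => h.2 heC)
    exact heC.2 (M.closure_subset_closure hAe he)
  have hFlat : M.IsFlat A := by
    refine ⟨fun I Y hIA hIY => ?_, hAE⟩
    calc Y ⊆ M.closure I := hIY.subset_closure
      _ = M.closure A := hIA.closure_eq_closure
      _ = A := hAcl
  -- A is cyclic
  have hcyc : ∀ e ∈ A, e ∈ M.closure (A \ {e}) := by
    intro e he
    have heS : e ∈ S := he.1
    have heC : e ∉ C := he.2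
    have heScl : e ∈ M.closure (S \ {e}) := by
      by_contra h; exact heC ⟨heS, h⟩
    by_contra hecl
    obtain ⟨I, hI⟩ := M.exists_isBasis' (A \ {e})
    have hICS : I ∪ C ⊆ S := union_subset (hI.subset.trans (diff_subset.trans hAS))
      (fun c hc => hc.1)
    have hIC : M.Indep (I ∪ C) := hunion I hI.indep
      (hI.subset.trans (diff_subset.trans hAS))
    -- closure (I ∪ C) = closure (S \ {e})
    have hSe : S \ {e} = (A \ {e}) ∪ C := by
      ext x
      constructor
      · rintro ⟨hxS, hxe⟩
        by_cases hxC : x ∈ C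
        · exact Or.inr hxC
        · exact Or.inl ⟨⟨hxS, hxC⟩, hxe⟩
      · rintro (⟨⟨hxS, hxC⟩, hxe⟩ | hxC)
        · exact ⟨hxS, hxe⟩
        · exact ⟨hxC.1, fun hxe => heC (hxe ▸ hxC)⟩
    have hclIC : M.closure (I ∪ C) = M.closure (S \ {e}) := by
      rw [hSe, ← M.closure_union_closure_left_eq (A \ {e}) C,
        ← hI.closure_eq_closure, M.closure_union_closure_left_eq]
    have heI : e ∉ I := fun h => (hI.subset h).2 rfl
    have heIC : e ∉ I ∪ C := fun h => h.elim heI heC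
    -- e ∉ closure I, so insert e I is indep
    have heclI : e ∉ M.closure I := by
      rw [hI.closure_eq_closure]; exact hecl
    have hins : M.Indep (insert e I) :=
      ((hI.indep.notMem_closure_iff_of_notMem heI (hSE heS)).1 heclI)
    have hins2 : M.Indep (insert e I ∪ C) := hunion _ hins
      (insert_subset heS (hI.subset.trans (diff_subset.trans hAS)))
    have : M.Indep (insert e (I ∪ C)) := by rwa [← insert_union]
    have : e ∉ M.closure (I ∪ C) :=
      (hIC.notMem_closure_iff_of_notMem heIC (hSE heS)).2 this
    rw [hclIC] at this
    exact this heScl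
  -- X \ A = C
  have hXA : X \ A = C := by
    ext x
    constructor
    · rintro ⟨hxX, hxA⟩
      by_contra hxC
      exact hxA ⟨hXS hxX, hxC⟩
    · intro hx
      exact ⟨hCX hx, fun h => h.2 hx⟩
  -- rank inequality
  obtain ⟨I, hIA⟩ := M.exists_isBasis' A
  have hIS : I ⊆ S := hIA.subset.trans hAS
  have hIC : M.Indep (I ∪ C) := hunion I hIA.indep hIS
  have hdisj : Disjoint I C := disjoint_left.2 fun x hxI hxC => (hIA.subset hxI).2 hxC
  refine ⟨A, ⟨hFlat, hcyc⟩, ?_⟩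
  rw [hXA, eRk_basis' hIA, ← encard_union_eq hdisj]
  calc (I ∪ C).encard ≤ eRk M S := le_eRk hIC (union_subset hIS fun c hc => hc.1)
    _ = eRk M X := eRk_closure X

/-- `N` is freer than `M` iff for every cyclic flat `F` of `N` there is a
cyclic flat `A` of `M` with `r_M(A) + |F - A| ≤ r_N(F)`. -/
theorem freer_iff_cyclicFlat (M N : Matroid α) (hE : M.E = N.E) :
    (∀ X ⊆ M.E, eRk M X ≤ eRk N X) ↔
      (∀ F, CyclicFlat N F →
        ∃ A, CyclicFlat M A ∧ eRk M A + (F \ A).encard ≤ eRk N F) := by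
  constructor
  · intro h F hF
    have hFE : F ⊆ M.E := hE ▸ hF.1.subset_ground
    obtain ⟨A, hA, hle⟩ := exists_cyclicFlat_le M F hFE
    exact ⟨A, hA, hle.trans (h F hFE)⟩
  · intro h X hX
    obtain ⟨F, hF, hleF⟩ := exists_cyclicFlat_le N X (hE ▸ hX)
    obtain ⟨A, hA, hleA⟩ := h F hF
    calc eRk M X ≤ eRk M A + (X \ A).encard := eRk_le_add_diff A X
      _ ≤ eRk M A + ((F \ A).encard + (X \ F).encard) := by
          refine add_le_add_right ?_ _
          refine le_trans (encard_mono fun x hx => ?_) (encard_union_le _ _)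
          by_cases hxF : x ∈ F
          · exact Or.inl ⟨hxF, hx.2⟩
          · exact Or.inr ⟨hx.1, hxF⟩
      _ = (eRk M A + (F \ A).encard) + (X \ F).encard := by ring
      _ ≤ eRk N F + (X \ F).encard := add_le_add_left hleA _
      _ ≤ eRk N X := hleF


end PaperFormal
end
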